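/- arXiv:2407.09476 — 9 statements merged into one kernel-verified Lean document; each statement's English description precedes it below -/
import Mathlib

section
/- Let G be a finite simple graph that is 3-non-compliant. Then for any two non-adjacent vertices u and v of G, the number of common neighbors of u and v in G is at least 3, i.e. |N_G(u) ∩ N_G(v)| ≥ 3. -/
/-- `S` is a connected dominating set of the simple graph `G`: the subgraph of `G`
induced by `S` is connected (in particular `S` is nonempty) and every vertex
outside `S` has a neighbor in `S`. -/
def ConnDomSet {V : Type*} (G : SimpleGraph V) (S : Finset V) : Prop :=
  S.Nonempty ∧ (G.induce (↑S : Set V)).Connected ∧ ∀ v ∉ S, ∃ u ∈ S, G.Adj u v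

/-- A graph `G` is `k`-compliant if `G` or its complement has a connected dominating
set of cardinality at most `k`. -/
def Compliant {V : Type*} (G : SimpleGraph V) (k : ℕ) : Prop :=
  (∃ S : Finset V, S.card ≤ k ∧ ConnDomSet G S) ∨
    (∃ S : Finset V, S.card ≤ k ∧ ConnDomSet Gᶜ S)

lemma star_conn {V : Type*} (G : SimpleGraph V) (S : Set V) (a : V) (ha : a ∈ S)
    (h : ∀ b ∈ S, b = a ∨ G.Adj a b) : (G.induce S).Connected := by
  rw [SimpleGraph.connected_iff]
  have key : ∀ b : S, (G.induce S).Reachable b ⟨a, ha⟩ := by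
    rintro ⟨b, hb⟩
    rcases h b hb with rfl | hadj
    · exact SimpleGraph.Reachable.refl _
    · exact SimpleGraph.Adj.reachable (by exact hadj.symm)
  exact ⟨fun b c => (key b).trans (key c).symm, ⟨⟨a, ha⟩⟩⟩

theorem stmt0 {V : Type*} [Fintype V] [DecidableEq V] (G : SimpleGraph V)
    [DecidableRel G.Adj] (hG : ¬ Compliant G 3) (u v : V) (huv : u ≠ v)
    (hadj : ¬ G.Adj u v) :
    3 ≤ (G.neighborFinset u ∩ G.neighborFinset v).card := by
  by_contra hcard
  set C := G.neighborFinset u ∩ G.neighborFinset v with hC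
  have hC2 : C.card ≤ 2 := by omega
  have hmemC : ∀ x, x ∈ C ↔ G.Adj u x ∧ G.Adj v x := by
    intro x; simp [hC, SimpleGraph.mem_neighborFinset]
  have huC : u ∉ C := fun h => G.irrefl ((hmemC u).1 h).1
  have hvC : v ∉ C := fun h => G.irrefl ((hmemC v).1 h).2
  apply hG
  by_cases hx : ∃ x, ∀ c ∈ C, Gᶜ.Adj x c
  · -- complement has CDS {u, v, x}
    obtain ⟨x, hxall⟩ := hx
    have hxC : x ∉ C := fun h => (hxall x h).ne rfl
    refine Or.inr ⟨insert x {u, v}, ?_, ?_, ?_, ?_⟩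
    · have h1 : ({u, v} : Finset V).card ≤ 2 :=
        le_trans (Finset.card_insert_le _ _) (by simp)
      exact le_trans (Finset.card_insert_le _ _) (by omega)
    · exact ⟨u, by simp⟩
    · -- connectivity in Gᶜ
      have huvc : Gᶜ.Adj u v := ⟨huv, hadj⟩
      by_cases hxu : x = u ∨ Gᶜ.Adj u x
      · apply star_conn _ _ u (by simp)
        intro b hb
        simp only [Finset.coe_insert, Set.mem_insert_iff, Finset.coe_singleton,
          Set.mem_singleton_iff] at hb
        rcases hb with rfl | rfl | rfl
        · rcases hxu with rfl | h
          · exact Or.inl rfl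
          · exact Or.inr h
        · exact Or.inl rfl
        · exact Or.inr huvc
      · push_neg at hxu
        obtain ⟨hxu1, hxu2⟩ := hxu
        have hxv : x = v ∨ Gᶜ.Adj v x := by
          by_cases h1 : x = v
          · exact Or.inl h1
          · right
            have : ¬ (G.Adj u x ∧ G.Adj v x) := fun h => hxC ((hmemC x).2 h)
            have hux : G.Adj u x := by
              by_contra h
              exact hxu2 ⟨fun he => hxu1 he.symm, h⟩
            refine ⟨fun he => h1 he.symm, fun h => this ⟨hux, h⟩⟩
        apply star_conn _ _ v (by simp)
        intro b hb
        simp only [Finset.coe_insert, Set.mem_insert_iff, Finset.coe_singleton,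
          Set.mem_singleton_iff] at hb
        rcases hb with rfl | rfl | rfl
        · rcases hxv with rfl | h
          · exact Or.inl rfl
          · exact Or.inr h
        · exact Or.inr huvc.symm
        · exact Or.inl rfl
    · intro w hw
      simp only [Finset.mem_insert, Finset.mem_singleton, not_or] at hw
      obtain ⟨hwx, hwu, hwv⟩ := hw
      by_cases hwC : w ∈ C
      · exact ⟨x, by simp, hxall w hwC⟩
      · have : ¬ (G.Adj u w ∧ G.Adj v w) := fun h => hwC ((hmemC w).2 h)
        by_cases h1 : G.Adj u w
        · have h2 : ¬ G.Adj v w := fun h => this ⟨h1, h⟩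
          exact ⟨v, by simp, fun he => hwv he.symm, h2⟩
        · exact ⟨u, by simp, fun he => hwu he.symm, h1⟩
  · -- G has CDS insert u C
    push_neg at hx
    refine Or.inl ⟨insert u C, ?_, ⟨u, by simp⟩, ?_, ?_⟩
    · calc (insert u C).card ≤ C.card + 1 := Finset.card_insert_le _ _
        _ ≤ 3 := by omega
    · apply star_conn _ _ u (by simp)
      intro b hb
      simp only [Finset.coe_insert, Set.mem_insert_iff, Finset.mem_coe] at hb
      rcases hb with rfl | hb
      · exact Or.inl rfl
      · exact Or.inr ((hmemC b).1 hb).1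
    · intro w hw
      simp only [Finset.mem_insert, not_or] at hw
      obtain ⟨hwu, hwC⟩ := hw
      obtain ⟨c, hc, hnc⟩ := hx w
      have hwc : w ≠ c := fun he => hwC (he ▸ hc)
      have : G.Adj w c := by
        by_contra h
        exact hnc ⟨hwc, h⟩
      exact ⟨c, Finset.mem_insert_of_mem hc, this.symm⟩
end

section
/- Let G be a finite simple graph that is 3-non-compliant. Then for any two adjacent vertices u and v of G, the number of common neighbors of u and v in G is at least 2, i.e. |N_G(u) ∩ N_G(v)| ≥ 2. -/
/-- If some vertex of `S` is adjacent to every other vertex of `S`, then the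
induced subgraph on `S` is connected. -/
lemma hub_connected {V : Type*} (G : SimpleGraph V) (S : Set V) (a : V) (ha : a ∈ S)
    (h : ∀ b ∈ S, b ≠ a → G.Adj a b) : (G.induce S).Connected := by
  rw [SimpleGraph.connected_iff]
  have key : ∀ x : S, (G.induce S).Reachable ⟨a, ha⟩ x := by
    rintro ⟨x, hx⟩
    by_cases hxa : x = a
    · subst hxa; exact SimpleGraph.Reachable.refl _
    · exact SimpleGraph.Adj.reachable (by exact h x hx hxa)
  exact ⟨fun x y => ((key x).symm).trans (key y), ⟨⟨a, ha⟩⟩⟩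

lemma card3 {V : Type*} [DecidableEq V] (a b c : V) : ({a, b, c} : Finset V).card ≤ 3 := by
  apply (Finset.card_insert_le _ _).trans
  have := Finset.card_insert_le b ({c} : Finset V)
  simp only [Finset.card_singleton] at this ⊢
  omega

theorem stmt1 {V : Type*} [Fintype V] [DecidableEq V] (G : SimpleGraph V)
    [DecidableRel G.Adj] (hG : ¬ Compliant G 3) (u v : V) (hadj : G.Adj u v) :
    2 ≤ (G.neighborFinset u ∩ G.neighborFinset v).card := by
  by_contra hcard
  push_neg at hcard
  have hone : (G.neighborFinset u ∩ G.neighborFinset v).card ≤ 1 := by omega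
  have huniq : ∀ c c' : V, G.Adj u c → G.Adj v c → G.Adj u c' → G.Adj v c' → c = c' := by
    intro c c' h1 h2 h3 h4
    exact Finset.card_le_one.mp hone c (by simp [SimpleGraph.mem_neighborFinset, h1, h2])
      c' (by simp [SimpleGraph.mem_neighborFinset, h3, h4])
  apply hG
  by_cases hP : ∃ w, w ≠ u ∧ w ≠ v ∧ ¬G.Adj u w ∧ ¬G.Adj v w ∧
      ∀ c, G.Adj u c → G.Adj v c → ¬G.Adj c w
  · -- {u, v, w} is a CDS of Gᶜ
    obtain ⟨w, hwu, hwv, hadjuw, hadjvw, hwc⟩ := hP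
    right
    refine ⟨{u, v, w}, card3 u v w, ⟨u, by simp⟩, ?_, ?_⟩
    · apply hub_connected _ _ w (by simp)
      intro b hb hbw
      simp only [Finset.coe_insert, Set.mem_insert_iff, Finset.coe_singleton,
        Set.mem_singleton_iff] at hb
      rcases hb with rfl | rfl | rfl
      · exact (SimpleGraph.compl_adj _ _ _).mpr ⟨hwu, fun h => hadjuw h.symm⟩
      · exact (SimpleGraph.compl_adj _ _ _).mpr ⟨hwv, fun h => hadjvw h.symm⟩
      · exact absurd rfl hbw
    · intro x hx
      simp only [Finset.mem_insert, Finset.mem_singleton, not_or] at hx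
      obtain ⟨hxu, hxv, hxw⟩ := hx
      by_cases h1 : G.Adj u x
      · by_cases h2 : G.Adj v x
        · -- x is a common neighbor, so not adjacent to w
          refine ⟨w, by simp, (SimpleGraph.compl_adj _ _ _).mpr ⟨fun h => hxw h.symm, ?_⟩⟩
          intro h
          exact hwc x h1 h2 h.symm
        · exact ⟨v, by simp, (SimpleGraph.compl_adj _ _ _).mpr ⟨fun h => hxv h.symm, h2⟩⟩
      · exact ⟨u, by simp, (SimpleGraph.compl_adj _ _ _).mpr ⟨fun h => hxu h.symm, h1⟩⟩
  · push_neg at hP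
    by_cases hQ : ∀ x, x = u ∨ x = v ∨ G.Adj u x ∨ G.Adj v x
    · -- {u, v} is a CDS of G
      left
      refine ⟨{u, v}, (Finset.card_insert_le _ _).trans (by simp), ⟨u, by simp⟩, ?_, ?_⟩
      · apply hub_connected _ _ u (by simp)
        intro b hb hbu
        simp only [Finset.coe_insert, Set.mem_insert_iff, Finset.coe_singleton,
          Set.mem_singleton_iff] at hb
        rcases hb with rfl | rfl
        · exact absurd rfl hbu
        · exact hadj
      · intro x hx
        simp only [Finset.mem_insert, Finset.mem_singleton, not_or] at hx
        rcases hQ x with rfl | rfl | h | h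
        · exact absurd rfl hx.1
        · exact absurd rfl hx.2
        · exact ⟨u, by simp, h⟩
        · exact ⟨v, by simp, h⟩
    · -- there is an undominated w; by ¬hP it has a common-neighbor friend c
      push_neg at hQ
      obtain ⟨w, hwu, hwv, hadjuw, hadjvw⟩ := hQ
      obtain ⟨c, hcu, hcv, hcw⟩ := hP w hwu hwv hadjuw hadjvw
      -- {u, v, c} is a CDS of G
      left
      refine ⟨{u, v, c}, card3 u v c, ⟨u, by simp⟩, ?_, ?_⟩
      · apply hub_connected _ _ c (by simp)
        intro b hb hbc
        simp only [Finset.coe_insert, Set.mem_insert_iff, Finset.coe_singleton,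
          Set.mem_singleton_iff] at hb
        rcases hb with rfl | rfl | rfl
        · exact hcu.symm
        · exact hcv.symm
        · exact absurd rfl hbc
      · intro x hx
        simp only [Finset.mem_insert, Finset.mem_singleton, not_or] at hx
        obtain ⟨hxu, hxv, hxc⟩ := hx
        by_cases h1 : G.Adj u x
        · exact ⟨u, by simp, h1⟩
        by_cases h2 : G.Adj v x
        · exact ⟨v, by simp, h2⟩
        -- x is undominated, so by ¬hP it has a common-neighbor friend c', and c' = c
        obtain ⟨c', hc'u, hc'v, hc'x⟩ := hP x (fun h => hxu h) (fun h => hxv h) h1 h2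
        have : c' = c := huniq c' c hc'u hc'v hcu hcv
        exact ⟨c, by simp, this ▸ hc'x⟩
end

section
/- The Paley graph QR₁₃ is 3-non-compliant; that is, neither QR₁₃ nor its complement has a connected dominating set of cardinality at most 3. -/
def QR13 : SimpleGraph (ZMod 13) where
  Adj x y := x ≠ y ∧ IsSquare (x - y)
  symm := by
    constructor
    rintro x y ⟨hxy, z, hz⟩
    refine ⟨hxy.symm, 5 * z, ?_⟩
    have h25 : (25 : ZMod 13) = -1 := by decide
    calc y - x = -(x - y) := by ring
      _ = -(z * z) := by rw [hz]
      _ = 25 * (z * z) := by rw [h25]; ring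
      _ = 5 * z * (5 * z) := by ring
  loopless := by
    constructor
    rintro x ⟨hx, -⟩
    exact hx rfl

def Good {V : Type*} [Fintype V] [DecidableEq V] (G : SimpleGraph V) [DecidableRel G.Adj]
    (S : Finset V) : Prop :=
  S.Nonempty ∧
  (∀ u ∈ S, ∀ v ∈ S, u = v ∨ G.Adj u v ∨ ∃ w ∈ S, G.Adj u w ∧ G.Adj w v) ∧
  ∀ v, v ∉ S → ∃ u ∈ S, G.Adj u v

instance {V : Type*} [Fintype V] [DecidableEq V] (G : SimpleGraph V) [DecidableRel G.Adj]
    (S : Finset V) : Decidable (Good G S) := by unfold Good; infer_instance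

lemma key {V : Type*} [Fintype V] [DecidableEq V] (G : SimpleGraph V) [DecidableRel G.Adj]
    (S : Finset V) (hc : S.card ≤ 3) (h : ConnDomSet G S) : Good G S := by
  obtain ⟨hne, hconn, hdom⟩ := h
  refine ⟨hne, ?_, fun v hv => hdom v hv⟩
  intro u hu v hv
  have hr := hconn.preconnected ⟨u, hu⟩ ⟨v, hv⟩
  obtain ⟨w⟩ := hr
  have hp := w.toPath
  obtain ⟨p, hpath⟩ := hp
  have hlen : p.length < Fintype.card (↑S : Set V) := hpath.length_lt
  have hcard : Fintype.card (↑S : Set V) = S.card := Fintype.card_coe S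
  rw [hcard] at hlen
  have hlen3 : p.length ≤ 2 := by omega
  clear hlen hcard hpath hc hne hdom hconn
  cases p with
  | nil => left; simp
  | cons h1 q =>
    cases q with
    | nil =>
      right; left
      exact h1
    | @cons _ m _ h2 r =>
      cases r with
      | nil =>
        rename_i b
        right; right
        exact ⟨b.1, b.2, h1, h2⟩
      | cons h3 s => simp [SimpleGraph.Walk.length_cons] at hlen3

instance : DecidableRel QR13.Adj := fun x y => by
  unfold QR13; exact instDecidableAnd

lemma three (S : Finset (ZMod 13)) (hne : S.Nonempty) (hc : S.card ≤ 3) :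
    ∃ a b c : ZMod 13, S = {a, b, c} := by
  obtain h|h|h : S.card = 1 ∨ S.card = 2 ∨ S.card = 3 := by
    have := Finset.card_pos.mpr hne; omega
  · obtain ⟨a, ha⟩ := Finset.card_eq_one.mp h
    exact ⟨a, a, a, by rw [ha]; ext x; simp⟩
  · obtain ⟨a, b, hab, hS⟩ := Finset.card_eq_two.mp h
    exact ⟨a, a, b, by rw [hS]; ext x; simp⟩
  · obtain ⟨a, b, c, _, _, _, hS⟩ := Finset.card_eq_three.mp h
    exact ⟨a, b, c, hS⟩

def adjB (x y : ZMod 13) : Bool := x ≠ y && ((x - y).val ∈ ([1,3,4,9,10,12] : List ℕ))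

def adjBc (x y : ZMod 13) : Bool := x ≠ y && !((x - y).val ∈ ([1,3,4,9,10,12] : List ℕ))

lemma adjB_iff (x y : ZMod 13) : QR13.Adj x y ↔ adjB x y = true := by
  revert x y; decide

lemma adjBc_iff (x y : ZMod 13) : QR13ᶜ.Adj x y ↔ adjBc x y = true := by
  revert x y; decide

def checkB (adj : ZMod 13 → ZMod 13 → Bool) (a b c : ZMod 13) : Bool :=
  ((List.finRange 13).all fun i =>
    let v : ZMod 13 := (i : Fin 13)
    (v = a || v = b || v = c) || adj a v || adj b v || adj c v) &&
  (([a, b, c] : List (ZMod 13)).all fun u =>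
    ([a, b, c] : List (ZMod 13)).all fun v =>
      (u = v) || adj u v || ([a, b, c] : List (ZMod 13)).any fun w => adj u w && adj w v)

lemma bridge {G : SimpleGraph (ZMod 13)} [DecidableRel G.Adj]
    {adj : ZMod 13 → ZMod 13 → Bool} (hadj : ∀ x y, G.Adj x y ↔ adj x y = true)
    (a b c : ZMod 13) (h : Good G {a, b, c}) : checkB adj a b c = true := by
  obtain ⟨-, hconn, hdom⟩ := h
  rw [checkB, Bool.and_eq_true, List.all_eq_true, List.all_eq_true]
  constructor
  · intro (i : ZMod 13) _
    simp only [Bool.or_eq_true, decide_eq_true_eq]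
    by_cases hv : (i : ZMod 13) ∈ ({a, b, c} : Finset (ZMod 13))
    · simp only [Finset.mem_insert, Finset.mem_singleton] at hv
      tauto
    · obtain ⟨u, hu, huv⟩ := hdom _ hv
      rw [hadj] at huv
      simp only [Finset.mem_insert, Finset.mem_singleton] at hu
      rcases hu with rfl | rfl | rfl <;> tauto
  · intro u hu
    rw [List.all_eq_true]
    intro v hv
    simp only [List.mem_cons, List.mem_singleton, List.not_mem_nil, or_false] at hu hv
    have hu' : u ∈ ({a, b, c} : Finset (ZMod 13)) := by
      simp only [Finset.mem_insert, Finset.mem_singleton]; tauto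
    have hv' : v ∈ ({a, b, c} : Finset (ZMod 13)) := by
      simp only [Finset.mem_insert, Finset.mem_singleton]; tauto
    rcases hconn u hu' v hv' with h | h | ⟨w, hw, h1, h2⟩
    · simp [h]
    · rw [hadj] at h; simp [h]
    · rw [hadj] at h1 h2
      simp only [Finset.mem_insert, Finset.mem_singleton] at hw
      simp only [Bool.or_eq_true, List.any_eq_true, List.mem_cons, Bool.and_eq_true]
      exact Or.inr ⟨w, by tauto, h1, h2⟩

set_option maxRecDepth 10000 in
lemma noCheck : ∀ a b c : ZMod 13,
    checkB adjB a b c = false ∧ checkB adjBc a b c = false := by decide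

theorem stmt3 : ¬ Compliant QR13 3 := by
  rintro (⟨S, hc, hS⟩ | ⟨S, hc, hS⟩) <;>
  · obtain ⟨a, b, c, rfl⟩ := three S hS.1 hc
    first
    | have := bridge adjB_iff a b c (key QR13 _ hc hS)
      rw [(noCheck a b c).1] at this; exact absurd this (by simp)
    | have := bridge adjBc_iff a b c (key QR13ᶜ _ hc hS)
      rw [(noCheck a b c).2] at this; exact absurd this (by simp)
end

section
/- Let G be a finite simple graph, let k ≥ 2, and let u and v be distinct vertices of G that are twins, meaning N_G(u) \ {v} = N_G(v) \ {u}. Then G is k-non-compliant if and only if the induced subgraph G − v (obtained by deleting the vertex v) is k-non-compliant. -/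
set_option linter.unusedSectionVars false

namespace Stmt5Aux
variable {V : Type*}

def Step (G : SimpleGraph V) (S : Set V) (x y : V) : Prop :=
  x ∈ S ∧ y ∈ S ∧ G.Adj x y

def ConnIn (G : SimpleGraph V) (S : Set V) (a b : V) : Prop :=
  Relation.ReflTransGen (Step G S) a b


lemma walk_connIn {G : SimpleGraph V} {S : Set V} :
    ∀ {a b : S}, (G.induce S).Walk a b → ConnIn G S ↑a ↑b := by
  intro a b w
  induction w with
  | nil => exact Relation.ReflTransGen.refl
  | @cons x y z h p ih =>
      exact Relation.ReflTransGen.head ⟨x.2, y.2, h⟩ ih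

lemma connIn_reachable {G : SimpleGraph V} {S : Set V} {a b : V}
    (h : ConnIn G S a b) :
    ∀ (ha : a ∈ S) (hb : b ∈ S), (G.induce S).Reachable ⟨a, ha⟩ ⟨b, hb⟩ := by
  induction h with
  | refl => intro ha hb; rfl
  | @tail c d h1 h2 ih =>
      intro ha hb
      exact (ih ha h2.1).trans (SimpleGraph.Adj.reachable (u := (⟨c, h2.1⟩ : S))
        (v := (⟨d, hb⟩ : S)) h2.2.2)

lemma induce_connected_iff (G : SimpleGraph V) (S : Set V) :
    (G.induce S).Connected ↔ S.Nonempty ∧ ∀ a ∈ S, ∀ b ∈ S, ConnIn G S a b := by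
  constructor
  · intro h
    refine ⟨?_, ?_⟩
    · obtain ⟨⟨x, hx⟩⟩ := h.nonempty; exact ⟨x, hx⟩
    · intro a ha b hb
      obtain ⟨w⟩ := h.preconnected ⟨a, ha⟩ ⟨b, hb⟩
      exact walk_connIn w
  · rintro ⟨⟨x, hx⟩, h⟩
    haveI : Nonempty S := ⟨⟨x, hx⟩⟩
    exact ⟨fun a b => connIn_reachable (h a a.2 b b.2) a.2 b.2⟩

/-- Plain connectivity condition on a finset. -/
def PC (G : SimpleGraph V) (T : Finset V) : Prop :=
  T.Nonempty ∧ ∀ a ∈ T, ∀ b ∈ T, ConnIn G (↑T : Set V) a b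

lemma connDomSet_iff_plain (G : SimpleGraph V) (S : Finset V) :
    ConnDomSet G S ↔ PC G S ∧ ∀ w ∉ S, ∃ x ∈ S, G.Adj x w := by
  unfold ConnDomSet PC
  rw [induce_connected_iff]
  constructor
  · rintro ⟨h1, ⟨_, h2⟩, h3⟩
    exact ⟨⟨h1, fun a ha b hb => h2 a ha b hb⟩, h3⟩
  · rintro ⟨⟨h1, h2⟩, h3⟩
    exact ⟨h1, ⟨h1, fun a ha b hb => h2 a ha b hb⟩, h3⟩

variable [DecidableEq V]

/-- Transfer ConnIn from induced subgraph to ambient graph. -/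
lemma connIn_induce_to {G : SimpleGraph V} {A : Set V} {S' : Finset A} {a b : A}
    (h : ConnIn (G.induce A) (↑S' : Set A) a b) :
    ConnIn G (↑(S'.image Subtype.val) : Set V) ↑a ↑b := by
  induction h with
  | refl => exact Relation.ReflTransGen.refl
  | @tail c d h1 h2 ih =>
      refine ih.tail ⟨?_, ?_, h2.2.2⟩
      · simp only [Finset.coe_image, Set.mem_image, Finset.mem_coe]
        exact ⟨c, h2.1, rfl⟩
      · simp only [Finset.coe_image, Set.mem_image, Finset.mem_coe]
        exact ⟨d, h2.2.1, rfl⟩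

/-- Transfer ConnIn from ambient graph to induced subgraph. -/
lemma connIn_induce_from {G : SimpleGraph V} {A : Set V} {S' : Finset A} {x y : V}
    (h : ConnIn G (↑(S'.image Subtype.val) : Set V) x y) :
    ∀ (x' y' : A), ↑x' = x → ↑y' = y → x' ∈ S' → y' ∈ S' →
      ConnIn (G.induce A) (↑S' : Set A) x' y' := by
  induction h with
  | refl =>
      intro x' y' hx hy _ _
      have : x' = y' := Subtype.ext (hx.trans hy.symm)
      subst this; exact Relation.ReflTransGen.refl
  | @tail c d h1 h2 ih =>
      intro x' y' hx hy hx' hy'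
      have hc : c ∈ (↑(S'.image Subtype.val) : Set V) := h2.1
      simp only [Finset.coe_image, Set.mem_image, Finset.mem_coe] at hc
      obtain ⟨c', hc', hcc⟩ := hc
      refine (ih x' c' hx hcc hx' hc').tail ⟨hc', hy', ?_⟩
      show G.Adj ↑c' ↑y'
      rw [hcc, hy]
      exact h2.2.2

lemma connDomSet_induce_iff {G : SimpleGraph V} {v : V} (S' : Finset ({w : V | w ≠ v})) :
    ConnDomSet (G.induce {w : V | w ≠ v}) S' ↔
      (PC G (S'.image Subtype.val) ∧
        ∀ w, w ≠ v → w ∉ S'.image Subtype.val → ∃ x ∈ S'.image Subtype.val, G.Adj x w) := by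
  rw [connDomSet_iff_plain]
  set T := S'.image Subtype.val with hT
  have hmemT : ∀ (x : ({w : V | w ≠ v})), (↑x ∈ T) ↔ x ∈ S' := by
    intro x
    constructor
    · intro h
      rw [hT, Finset.mem_image] at h
      obtain ⟨a, ha, hax⟩ := h
      rwa [Subtype.ext hax] at ha
    · intro hx
      exact Finset.mem_image_of_mem _ hx
  constructor
  · rintro ⟨⟨h1, h2⟩, h3⟩
    refine ⟨⟨?_, ?_⟩, ?_⟩
    · obtain ⟨x, hx⟩ := h1
      exact ⟨↑x, (hmemT x).mpr hx⟩
    · intro a ha b hb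
      simp only [hT, Finset.mem_image] at ha hb
      obtain ⟨a', ha', rfl⟩ := ha
      obtain ⟨b', hb', rfl⟩ := hb
      exact connIn_induce_to (h2 a' ha' b' hb')
    · intro w hw hwT
      have hw' : (⟨w, hw⟩ : ({w : V | w ≠ v})) ∉ S' := by
        intro hc; exact hwT ((hmemT _).mpr hc)
      obtain ⟨x, hx, hadj⟩ := h3 _ hw'
      exact ⟨↑x, (hmemT x).mpr hx, hadj⟩
  · rintro ⟨⟨h1, h2⟩, h3⟩
    refine ⟨⟨?_, ?_⟩, ?_⟩
    · obtain ⟨x, hx⟩ := h1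
      simp only [hT, Finset.mem_image] at hx
      obtain ⟨x', hx', rfl⟩ := hx
      exact ⟨x', hx'⟩
    · intro a ha b hb
      exact connIn_induce_from (h2 ↑a ((hmemT a).mpr ha) ↑b ((hmemT b).mpr hb))
        a b rfl rfl ha hb
    · intro y hy
      obtain ⟨x, hx, hadj⟩ := h3 ↑y y.2 (fun hc => hy (by
        simp only [hT, Finset.mem_image] at hc
        obtain ⟨y', hy', hyy⟩ := hc
        rwa [show y' = y from Subtype.ext hyy] at hy'))
      simp only [hT, Finset.mem_image] at hx
      obtain ⟨x', hx', rfl⟩ := hx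
      exact ⟨x', hx', hadj⟩



/-- The forward combinatorial lemma: replace `v` by `u` in a CDS. -/
lemma fwd {G : SimpleGraph V} {u v : V} (huv : u ≠ v)
    (tw : ∀ w, w ≠ u → w ≠ v → (G.Adj u w ↔ G.Adj v w))
    {S : Finset V} (hS : PC G S) (hdom : ∀ w ∉ S, ∃ x ∈ S, G.Adj x w) :
    ∃ T : Finset V, v ∉ T ∧ T.card ≤ S.card ∧ PC G T ∧
      ∀ w, w ≠ v → w ∉ T → ∃ x ∈ T, G.Adj x w := by
  by_cases hv : v ∈ S
  · -- replace v by u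
    set T : Finset V := insert u (S.erase v) with hT
    have hvT : v ∉ T := by
      simp only [hT, Finset.mem_insert, Finset.mem_erase]
      push_neg
      exact ⟨huv.symm, fun h => absurd rfl h⟩
    have huT : u ∈ T := Finset.mem_insert_self _ _
    have hsub : ∀ x ∈ S, x ≠ v → x ∈ T := by
      intro x hx hxv
      exact Finset.mem_insert_of_mem (Finset.mem_erase.mpr ⟨hxv, hx⟩)
    -- step transfer along f = swap v ↦ u
    have key : ∀ {a b : V}, ConnIn G (↑S : Set V) a b →
        ConnIn G (↑T : Set V)
          (if a = v then u else a) (if b = v then u else b) := by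
      intro a b h
      induction h with
      | refl => exact Relation.ReflTransGen.refl
      | @tail c d h1 h2 ih =>
          obtain ⟨hc, hd, hadj⟩ := h2
          rw [Finset.mem_coe] at hc hd
          have hfc : (if c = v then u else c) ∈ T := by
            split
            · exact huT
            · exact hsub c hc ‹¬ c = v›
          have hfd : (if d = v then u else d) ∈ T := by
            split
            · exact huT
            · exact hsub d hd ‹¬ d = v›
          by_cases hcv : c = v
          · by_cases hdu : d = u
            · -- f c = u = f d
              have : (if c = v then u else c) = (if d = v then u else d) := by
                rw [if_pos hcv, if_neg (fun h => huv (hdu.symm.trans h))]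
                exact hdu.symm
              rwa [this] at ih
            · have hdv : d ≠ v := fun h => by
                rw [hcv, h] at hadj; exact G.irrefl hadj
              have hadj' : G.Adj u d := (tw d hdu hdv).mpr (hcv ▸ hadj)
              refine ih.tail ⟨hfc, hfd, ?_⟩
              rw [if_pos hcv, if_neg hdv]
              exact hadj'
          · by_cases hdv : d = v
            · by_cases hcu : c = u
              · have : (if c = v then u else c) = (if d = v then u else d) := by
                  rw [if_neg hcv, if_pos hdv, hcu]
                rwa [this] at ih
              · have hadj' : G.Adj c u := by
                  have := (tw c hcu hcv).mpr (G.adj_symm (hdv ▸ hadj))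
                  exact this.symm
                refine ih.tail ⟨hfc, hfd, ?_⟩
                rw [if_neg hcv, if_pos hdv]
                exact hadj'
            · refine ih.tail ⟨hfc, hfd, ?_⟩
              rw [if_neg hcv, if_neg hdv]
              exact hadj
    refine ⟨T, hvT, ?_, ⟨⟨u, huT⟩, ?_⟩, ?_⟩
    · -- cardinality
      calc T.card ≤ (S.erase v).card + 1 := Finset.card_insert_le _ _
        _ = (S.card - 1) + 1 := by rw [Finset.card_erase_of_mem hv]
        _ ≤ S.card := by
            have : 1 ≤ S.card := Finset.card_pos.mpr ⟨v, hv⟩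
            omega
    · -- connectivity
      intro a ha b hb
      -- preimages
      have pre : ∀ x ∈ T, ∃ x₀ ∈ S, (if x₀ = v then u else x₀) = x := by
        intro x hx
        by_cases hxu : x = u
        · exact ⟨v, hv, by rw [if_pos rfl, hxu]⟩
        · have hx' : x ∈ S.erase v := by
            rcases Finset.mem_insert.mp hx with h | h
            · exact absurd h hxu
            · exact h
          obtain ⟨hxv, hxS⟩ := Finset.mem_erase.mp hx'
          exact ⟨x, hxS, if_neg hxv⟩
      obtain ⟨a₀, ha₀, hfa⟩ := pre a ha
      obtain ⟨b₀, hb₀, hfb⟩ := pre b hb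
      have := key (hS.2 a₀ ha₀ b₀ hb₀)
      rwa [hfa, hfb] at this
    · -- domination
      intro w hwv hwT
      have hwS : w ∉ S := by
        intro hc
        exact hwT (hsub w hc hwv)
      obtain ⟨x, hx, hadj⟩ := hdom w hwS
      by_cases hxv : x = v
      · have hwu : w ≠ u := fun h => hwT (h ▸ huT)
        have : G.Adj u w := (tw w hwu hwv).mpr (hxv ▸ hadj)
        exact ⟨u, huT, this⟩
      · exact ⟨x, hsub x hx hxv, hadj⟩
  · -- v ∉ S : keep S
    exact ⟨S, hv, le_refl _, hS, fun w _ hw => hdom w hw⟩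


end Stmt5Aux
namespace Stmt5Aux2
variable {V : Type*}
open Stmt5Aux

variable [DecidableEq V]

lemma singleStep_connIn {G : SimpleGraph V} {T : Finset V} {a b : V}
    (ha : a ∈ T) (hb : b ∈ T) (h : G.Adj a b) : ConnIn G (↑T : Set V) a b :=
  Relation.ReflTransGen.single ⟨Finset.mem_coe.mpr ha, Finset.mem_coe.mpr hb, h⟩

/-- Backward combinatorial lemma. -/
lemma bwd {G : SimpleGraph V} {k : ℕ} (hk : 2 ≤ k) {u v : V} (huv : u ≠ v)
    (tw : ∀ w, w ≠ u → w ≠ v → (G.Adj u w ↔ G.Adj v w))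
    {T : Finset V} (hvT : v ∉ T) (hcard : T.card ≤ k) (hPC : PC G T)
    (hdom : ∀ w, w ≠ v → w ∉ T → ∃ x ∈ T, G.Adj x w) :
    (∃ S : Finset V, S.card ≤ k ∧ ConnDomSet G S) ∨
      (∃ S : Finset V, S.card ≤ k ∧ ConnDomSet Gᶜ S) := by
  by_cases hx : ∃ x ∈ T, G.Adj x v
  · left
    refine ⟨T, hcard, (connDomSet_iff_plain G T).mpr ⟨hPC, ?_⟩⟩
    intro w hw
    by_cases hwv : w = v
    · obtain ⟨x, hxT, hadj⟩ := hx
      exact ⟨x, hxT, hwv ▸ hadj⟩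
    · exact hdom w hwv hw
  · push_neg at hx
    -- u must be in T
    have huT : u ∈ T := by
      by_contra huT
      obtain ⟨x, hxT, hadj⟩ := hdom u huv huT
      have hxv : x ≠ v := fun h => hvT (h ▸ hxT)
      have hxu : x ≠ u := hadj.ne
      have : G.Adj v x := (tw x hxu hxv).mp hadj.symm
      exact hx x hxT this.symm
    have hnuv : ¬ G.Adj u v := hx u huT
    -- any T-neighbor of u gives a contradiction with hx
    have hTnbr : ∀ c ∈ T, ¬ G.Adj u c := by
      intro c hcT hadj
      have hcv : c ≠ v := fun h => hvT (h ▸ hcT)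
      have hcu : c ≠ u := hadj.ne'
      exact hx c hcT ((tw c hcu hcv).mp hadj).symm
    -- hence T = {u}
    have hTu : ∀ z ∈ T, z = u := by
      intro z hzT
      by_contra hzu
      have h := hPC.2 u huT z hzT
      rcases (Relation.ReflTransGen.cases_head h) with h | ⟨c, hstep, _⟩
      · exact hzu h.symm
      · exact hTnbr c (Finset.mem_coe.mp hstep.2.1) hstep.2.2
    by_cases hy : ∃ y, G.Adj u y
    · -- extend {u} with a neighbor y
      obtain ⟨y, hadj⟩ := hy
      have hyv : y ≠ v := fun h => hnuv (h ▸ hadj)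
      have hyu : y ≠ u := hadj.ne'
      have hvy : G.Adj y v := (((tw y hyu hyv).mp hadj)).symm
      left
      refine ⟨{u, y}, ?_, (connDomSet_iff_plain G _).mpr ⟨⟨⟨u, by simp⟩, ?_⟩, ?_⟩⟩
      · calc ({u, y} : Finset V).card ≤ ({y} : Finset V).card + 1 :=
              Finset.card_insert_le _ _
          _ ≤ k := by simp; omega
      · intro a ha b hb
        simp only [Finset.mem_insert, Finset.mem_singleton] at ha hb
        have hu' : u ∈ ({u, y} : Finset V) := by simp
        have hy' : y ∈ ({u, y} : Finset V) := by simp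
        rcases ha with rfl | rfl <;> rcases hb with rfl | rfl
        · exact Relation.ReflTransGen.refl
        · exact singleStep_connIn hu' hy' hadj
        · exact singleStep_connIn hy' hu' hadj.symm
        · exact Relation.ReflTransGen.refl
      · intro w hw
        simp only [Finset.mem_insert, Finset.mem_singleton, not_or] at hw
        obtain ⟨hwu, hwy⟩ := hw
        by_cases hwv : w = v
        · exact ⟨y, by simp, hwv ▸ hvy⟩
        · have hwT : w ∉ T := fun h => hwu (hTu w h)
          obtain ⟨x, hxT, hadj'⟩ := hdom w hwv hwT
          exact ⟨x, by simp [hTu x hxT], hadj'⟩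
    · -- u is isolated in G; then V = {u, v} and we use the complement
      push_neg at hy
      have hall : ∀ w : V, w = u ∨ w = v := by
        intro w
        by_contra hc
        push_neg at hc
        obtain ⟨hwu, hwv⟩ := hc
        have hwT : w ∉ T := fun h => hwu (hTu w h)
        obtain ⟨x, hxT, hadj⟩ := hdom w hwv hwT
        exact hy w ((hTu x hxT) ▸ hadj)
      right
      refine ⟨{u}, by simp; omega, (connDomSet_iff_plain Gᶜ _).mpr
        ⟨⟨⟨u, by simp⟩, ?_⟩, ?_⟩⟩
      · intro a ha b hb
        simp only [Finset.mem_singleton] at ha hb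
        subst ha; subst hb
        exact Relation.ReflTransGen.refl
      · intro w hw
        simp only [Finset.mem_singleton] at hw
        rcases hall w with rfl | rfl
        · exact absurd rfl hw
        · exact ⟨u, by simp, ⟨huv, hnuv⟩⟩

end Stmt5Aux2
namespace Stmt5Aux3
open Stmt5Aux Stmt5Aux2
variable {V : Type*} [DecidableEq V]

lemma toSubtype {v : V} (T : Finset V) (hvT : v ∉ T) :
    ∃ S' : Finset ({w : V | w ≠ v}), S'.image Subtype.val = T := by
  haveI : DecidablePred (· ∈ ({w : V | w ≠ v} : Set V)) :=
    fun x => decidable_of_iff (x ≠ v) Iff.rfl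
  refine ⟨T.subtype (· ∈ ({w : V | w ≠ v} : Set V)), ?_⟩
  ext x
  simp only [Finset.mem_image, Finset.mem_subtype]
  constructor
  · rintro ⟨a, ha, rfl⟩; exact ha
  · intro hx
    have hxv : x ∈ ({w : V | w ≠ v} : Set V) := fun h => hvT (h ▸ hx)
    exact ⟨⟨x, hxv⟩, hx, rfl⟩

lemma compl_induce (G : SimpleGraph V) (A : Set V) :
    (G.induce A)ᶜ = Gᶜ.induce A := by
  ext a b
  simp only [SimpleGraph.compl_adj, SimpleGraph.comap_adj, Function.Embedding.coe_subtype]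
  constructor
  · rintro ⟨h1, h2⟩
    exact ⟨fun h => h1 (Subtype.ext h), h2⟩
  · rintro ⟨h1, h2⟩
    exact ⟨fun h => h1 (congrArg Subtype.val h), h2⟩

theorem stmt5' {V : Type*} [Fintype V] [DecidableEq V] (G : SimpleGraph V)
    (k : ℕ) (hk : 2 ≤ k) (u v : V) (huv : u ≠ v)
    (htwin : G.neighborSet u \ {v} = G.neighborSet v \ {u}) :
    ¬ Compliant G k ↔ ¬ Compliant (G.induce {w : V | w ≠ v}) k := by
  have tw : ∀ w, w ≠ u → w ≠ v → (G.Adj u w ↔ G.Adj v w) := by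
    intro w hwu hwv
    have h := Set.ext_iff.mp htwin w
    simp only [Set.mem_diff, SimpleGraph.mem_neighborSet, Set.mem_singleton_iff] at h
    constructor
    · intro ha; exact ((h.mp ⟨ha, hwv⟩).1)
    · intro ha; exact ((h.mpr ⟨ha, hwu⟩).1)
  have twc : ∀ w, w ≠ u → w ≠ v → (Gᶜ.Adj u w ↔ Gᶜ.Adj v w) := by
    intro w hwu hwv
    simp only [SimpleGraph.compl_adj]
    constructor
    · rintro ⟨-, h⟩
      exact ⟨fun h' => hwv h'.symm, fun ha => h ((tw w hwu hwv).mpr ha)⟩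
    · rintro ⟨-, h⟩
      exact ⟨fun h' => hwu h'.symm, fun ha => h ((tw w hwu hwv).mp ha)⟩
  have hcompl : (G.induce {w : V | w ≠ v})ᶜ = Gᶜ.induce {w : V | w ≠ v} :=
    compl_induce G _
  suffices h : Compliant G k ↔ Compliant (G.induce {w : V | w ≠ v}) k from
    not_congr h
  constructor
  · rintro (⟨S, hc, hS⟩ | ⟨S, hc, hS⟩)
    · obtain ⟨hPC, hdom⟩ := (connDomSet_iff_plain G S).mp hS
      obtain ⟨T, hvT, hcardT, hPCT, hdomT⟩ := fwd huv tw hPC hdom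
      obtain ⟨S', hS'img⟩ := toSubtype T hvT
      left
      refine ⟨S', ?_, (connDomSet_induce_iff S').mpr ?_⟩
      · calc S'.card = (S'.image Subtype.val).card :=
              (Finset.card_image_of_injective _ Subtype.val_injective).symm
          _ = T.card := by rw [hS'img]
          _ ≤ k := le_trans hcardT hc
      · rw [hS'img]; exact ⟨hPCT, hdomT⟩
    · obtain ⟨hPC, hdom⟩ := (connDomSet_iff_plain Gᶜ S).mp hS
      obtain ⟨T, hvT, hcardT, hPCT, hdomT⟩ := fwd huv twc hPC hdom
      obtain ⟨S', hS'img⟩ := toSubtype T hvT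
      right
      rw [hcompl]
      refine ⟨S', ?_, (connDomSet_induce_iff S').mpr ?_⟩
      · calc S'.card = (S'.image Subtype.val).card :=
              (Finset.card_image_of_injective _ Subtype.val_injective).symm
          _ = T.card := by rw [hS'img]
          _ ≤ k := le_trans hcardT hc
      · rw [hS'img]; exact ⟨hPCT, hdomT⟩
  · rintro (⟨S', hc, hS'⟩ | ⟨S', hc, hS'⟩)
    · obtain ⟨hPC, hdom⟩ := (connDomSet_induce_iff S').mp hS'
      set T := S'.image Subtype.val with hT
      have hvT : v ∉ T := by
        intro h
        rw [hT, Finset.mem_image] at h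
        obtain ⟨a, _, ha⟩ := h
        exact a.2 ha
      have hcardT : T.card ≤ k := by
        rw [hT, Finset.card_image_of_injective _ Subtype.val_injective]
        exact hc
      exact bwd hk huv tw hvT hcardT hPC hdom
    · rw [hcompl] at hS'
      obtain ⟨hPC, hdom⟩ := (connDomSet_induce_iff (G := Gᶜ) S').mp hS'
      set T := S'.image Subtype.val with hT
      have hvT : v ∉ T := by
        intro h
        rw [hT, Finset.mem_image] at h
        obtain ⟨a, _, ha⟩ := h
        exact a.2 ha
      have hcardT : T.card ≤ k := by
        rw [hT, Finset.card_image_of_injective _ Subtype.val_injective]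
        exact hc
      rcases bwd hk huv twc hvT hcardT hPC hdom with h | h
      · right; exact h
      · left; rwa [compl_compl] at h

end Stmt5Aux3

theorem stmt5 {V : Type*} [Fintype V] [DecidableEq V] (G : SimpleGraph V)
    (k : ℕ) (hk : 2 ≤ k) (u v : V) (huv : u ≠ v)
    (htwin : G.neighborSet u \ {v} = G.neighborSet v \ {u}) :
    ¬ Compliant G k ↔ ¬ Compliant (G.induce {w : V | w ≠ v}) k := by
  exact Stmt5Aux3.stmt5' G k hk u v huv htwin
end

section
/- Let G be a finite simple graph on exactly 14 vertices and let u be a vertex of G with degree 6. If G is 3-non-compliant, then the sum of the degrees (in G) of the neighbors of u is at least 39, i.e. ∑_{v ∈ N_G(u)} deg_G(v) ≥ 39. -/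
/-- If every vertex of `S` is equal or adjacent to a fixed `c ∈ S` and `G` has no
connected dominating set of size `≤ k`, then domination by `S` fails. -/
lemma star_fail {V : Type*} (G : SimpleGraph V) {k : ℕ}
    (h : ∀ S : Finset V, S.card ≤ k → ¬ ConnDomSet G S)
    (S : Finset V) (hcard : S.card ≤ k) (c : V) (hc : c ∈ S)
    (hstar : ∀ x ∈ S, x = c ∨ G.Adj c x) :
    ∃ x, x ∉ S ∧ ∀ y ∈ S, ¬ G.Adj y x := by
  have key : ∀ a : (↑S : Set V), (G.induce (↑S : Set V)).Reachable ⟨c, hc⟩ a := by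
    rintro ⟨a, ha⟩
    rcases hstar a (Finset.mem_coe.mp ha) with rfl | hadj
    · exact SimpleGraph.Reachable.refl _
    · exact SimpleGraph.Adj.reachable (by simpa using hadj)
  have hconn : (G.induce (↑S : Set V)).Connected := by
    rw [SimpleGraph.connected_iff]
    exact ⟨fun a b => (key a).symm.trans (key b), ⟨⟨c, hc⟩⟩⟩
  have hdom : ¬ ∀ v ∉ S, ∃ u ∈ S, G.Adj u v := fun hd => h S hcard ⟨⟨c, hc⟩, hconn, hd⟩
  push_neg at hdom
  exact hdom

theorem stmt6 {V : Type*} [Fintype V] [DecidableEq V] (G : SimpleGraph V)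
    [DecidableRel G.Adj] (hV : Fintype.card V = 14) (u : V)
    (hdeg : G.degree u = 6) (hG : ¬ Compliant G 3) :
    39 ≤ ∑ v ∈ G.neighborFinset u, G.degree v := by
  classical
  have hGfail : ∀ S : Finset V, S.card ≤ 3 → ¬ ConnDomSet G S :=
    fun S hS hC => hG (Or.inl ⟨S, hS, hC⟩)
  have hHfail : ∀ S : Finset V, S.card ≤ 3 → ¬ ConnDomSet Gᶜ S :=
    fun S hS hC => hG (Or.inr ⟨S, hS, hC⟩)
  have notcompl : ∀ a b : V, a ≠ b → ¬ Gᶜ.Adj a b → G.Adj a b := by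
    intro a b hab h
    by_contra h'
    exact h (by rw [SimpleGraph.compl_adj]; exact ⟨hab, h'⟩)
  set N := G.neighborFinset u with hNdef
  have hmemN : ∀ x, x ∈ N ↔ G.Adj u x := fun x => SimpleGraph.mem_neighborFinset G u x
  have huN : u ∉ N := by simp [hmemN]
  set M := (Finset.univ : Finset V) \ insert u N with hMdef
  have hmemM : ∀ x, x ∈ M ↔ x ≠ u ∧ ¬ G.Adj u x := by
    intro x
    rw [hMdef]
    simp [hmemN x]
  have hNcard : N.card = 6 := hdeg
  have hMcard : M.card = 7 := by
    rw [hMdef, Finset.card_sdiff_of_subset (Finset.subset_univ _), Finset.card_univ, hV,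
      Finset.card_insert_of_notMem huN, hNcard]
  -- C1 : for every neighbor v of u there is m in M nonadjacent to v
  have C1 : ∀ v ∈ N, ∃ m ∈ M, ¬ G.Adj v m := by
    intro v hv
    have hcard2 : ({u, v} : Finset V).card ≤ 3 :=
      le_trans (Finset.card_insert_le _ _) (by simp)
    obtain ⟨x, hxS, hxA⟩ := star_fail G hGfail {u, v} hcard2 u (by simp)
      (by
        intro x hx
        rcases Finset.mem_insert.mp hx with rfl | hx
        · exact Or.inl rfl
        · rw [Finset.mem_singleton] at hx
          exact Or.inr (by rw [hx]; exact (hmemN v).mp hv))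
    refine ⟨x, ?_, fun h => hxA v (by simp) h⟩
    rw [hmemM]
    exact ⟨fun h => hxS (h ▸ by simp), fun h => hxA u (by simp) h⟩
  -- C2 : for all v w in N there is m in M nonadjacent to both
  have C2 : ∀ v ∈ N, ∀ w ∈ N, ∃ m ∈ M, ¬ G.Adj v m ∧ ¬ G.Adj w m := by
    intro v hv w hw
    have hcard3 : ({u, v, w} : Finset V).card ≤ 3 := by
      refine le_trans (Finset.card_insert_le _ _) ?_
      refine Nat.succ_le_succ (le_trans (Finset.card_insert_le _ _) ?_)
      simp
    obtain ⟨x, hxS, hxA⟩ := star_fail G hGfail {u, v, w} hcard3 u (by simp)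
      (by
        intro x hx
        rcases Finset.mem_insert.mp hx with rfl | hx
        · exact Or.inl rfl
        · rcases Finset.mem_insert.mp hx with rfl | hx
          · exact Or.inr ((hmemN x).mp hv)
          · rw [Finset.mem_singleton] at hx
            exact Or.inr (by rw [hx]; exact (hmemN w).mp hw))
    refine ⟨x, ?_, fun h => hxA v (by simp) h, fun h => hxA w (by simp) h⟩
    rw [hmemM]
    exact ⟨fun h => hxS (h ▸ by simp), fun h => hxA u (by simp) h⟩
  -- C4 : if v ∈ N and m ∈ M are nonadjacent, some other w ∈ N is adjacent to both
  have C4 : ∀ v ∈ N, ∀ m ∈ M, ¬ G.Adj v m →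
      ∃ w ∈ N, w ≠ v ∧ G.Adj w v ∧ G.Adj w m := by
    intro v hv m hm hvm
    have hmu : m ≠ u := ((hmemM m).mp hm).1
    have hum : ¬ G.Adj u m := ((hmemM m).mp hm).2
    have hmv : m ≠ v := by rintro rfl; exact hum ((hmemN m).mp hv)
    have hcard3 : ({m, u, v} : Finset V).card ≤ 3 := by
      refine le_trans (Finset.card_insert_le _ _) ?_
      refine Nat.succ_le_succ (le_trans (Finset.card_insert_le _ _) ?_)
      simp
    obtain ⟨x, hxS, hxA⟩ := star_fail Gᶜ hHfail {m, u, v} hcard3 m (by simp)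
      (by
        intro x hx
        rcases Finset.mem_insert.mp hx with rfl | hx
        · exact Or.inl rfl
        · rcases Finset.mem_insert.mp hx with rfl | hx
          · exact Or.inr ((SimpleGraph.compl_adj G m x).mpr ⟨hmu, fun h => hum h.symm⟩)
          · rw [Finset.mem_singleton] at hx; subst hx
            exact Or.inr ((SimpleGraph.compl_adj G m x).mpr ⟨hmv, fun h => hvm h.symm⟩))
    have hxm : x ≠ m := fun h => hxS (h ▸ by simp)
    have hxu : x ≠ u := fun h => hxS (h ▸ by simp)
    have hxv : x ≠ v := fun h => hxS (h ▸ by simp)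
    have h1 : G.Adj u x := notcompl u x (Ne.symm hxu) (hxA u (by simp))
    have h2 : G.Adj m x := notcompl m x (Ne.symm hxm) (hxA m (by simp))
    have h3 : G.Adj v x := notcompl v x (Ne.symm hxv) (hxA v (by simp))
    exact ⟨x, (hmemN x).mpr h1, hxv, h3.symm, h2.symm⟩
  -- ClaimM : every m ∈ M has at least 3 neighbors in N
  have C5 : ∀ m ∈ M, 3 ≤ (N.filter (fun v => G.Adj v m)).card := by
    intro m hm
    by_contra hlt
    push_neg at hlt
    set D := N.filter (fun v => G.Adj v m) with hD
    have hcard2 : D.card ≤ 2 := by omega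
    have key : ∃ y ∈ M, y ≠ m ∧ ∀ x ∈ D, ¬ G.Adj x y := by
      rcases D.eq_empty_or_nonempty with hDe | ⟨w, hw⟩
      · have h1 : 1 < M.card := by rw [hMcard]; norm_num
        obtain ⟨a, ha, b, hb, hab⟩ := Finset.one_lt_card.mp h1
        rcases eq_or_ne a m with rfl | h
        · exact ⟨b, hb, Ne.symm hab, by simp [hDe]⟩
        · exact ⟨a, ha, h, by simp [hDe]⟩
      · have hwN : w ∈ N := (Finset.mem_filter.mp hw).1
        have hwm : G.Adj w m := (Finset.mem_filter.mp hw).2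
        by_cases hex : ∃ x ∈ D, x ≠ w
        · obtain ⟨w', hw', hww'⟩ := hex
          have hw'N : w' ∈ N := (Finset.mem_filter.mp hw').1
          have hcov : ∀ x ∈ D, x = w ∨ x = w' := by
            intro x hx
            by_contra hboth
            push_neg at hboth
            have hsub : ({x, w, w'} : Finset V) ⊆ D := by
              intro z hz
              rcases Finset.mem_insert.mp hz with rfl | hz
              · exact hx
              · rcases Finset.mem_insert.mp hz with rfl | hz
                · exact hw
                · rw [Finset.mem_singleton] at hz; subst hz; exact hw'
            have h3 : ({x, w, w'} : Finset V).card = 3 := by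
              rw [Finset.card_insert_of_notMem (by simp [hboth.1, hboth.2]),
                Finset.card_insert_of_notMem (Finset.notMem_singleton.mpr (Ne.symm hww')),
                Finset.card_singleton]
            have := Finset.card_le_card hsub
            omega
          obtain ⟨y, hyM, hy1, hy2⟩ := C2 w hwN w' hw'N
          refine ⟨y, hyM, fun hym => hy1 (hym ▸ hwm), ?_⟩
          intro x hx
          rcases hcov x hx with rfl | rfl
          · exact hy1
          · exact hy2
        · push_neg at hex
          obtain ⟨y, hyM, hy1, _⟩ := C2 w hwN w hwN
          refine ⟨y, hyM, fun hym => hy1 (hym ▸ hwm), ?_⟩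
          intro x hx
          rw [hex x hx]
          exact hy1
    obtain ⟨y, hyM, hym, hcov⟩ := key
    have hyu := (hmemM y).mp hyM
    have hmu := (hmemM m).mp hm
    have hcard3 : ({u, m, y} : Finset V).card ≤ 3 := by
      refine le_trans (Finset.card_insert_le _ _) ?_
      refine Nat.succ_le_succ (le_trans (Finset.card_insert_le _ _) ?_)
      simp
    obtain ⟨x, hxS, hxA⟩ := star_fail Gᶜ hHfail {u, m, y} hcard3 u (by simp)
      (by
        intro x hx
        rcases Finset.mem_insert.mp hx with rfl | hx
        · exact Or.inl rfl
        · rcases Finset.mem_insert.mp hx with rfl | hx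
          · exact Or.inr ((SimpleGraph.compl_adj G u x).mpr ⟨Ne.symm hmu.1, hmu.2⟩)
          · rw [Finset.mem_singleton] at hx; subst hx
            exact Or.inr ((SimpleGraph.compl_adj G u x).mpr ⟨Ne.symm hyu.1, hyu.2⟩))
    have hxu : x ≠ u := fun h => hxS (h ▸ by simp)
    have hxm : x ≠ m := fun h => hxS (h ▸ by simp)
    have hxy : x ≠ y := fun h => hxS (h ▸ by simp)
    have h1 : G.Adj u x := notcompl u x (Ne.symm hxu) (hxA u (by simp))
    have h2 : G.Adj m x := notcompl m x (Ne.symm hxm) (hxA m (by simp))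
    have h3 : G.Adj y x := notcompl y x (Ne.symm hxy) (hxA y (by simp))
    have hxD : x ∈ D := Finset.mem_filter.mpr ⟨(hmemN x).mpr h1, h2.symm⟩
    exact hcov x hxD h3.symm
  -- ClaimN : every v ∈ N has at least 2 neighbors in N
  have C6 : ∀ v ∈ N, 2 ≤ (N.filter (fun w => G.Adj w v)).card := by
    intro v hv
    by_contra hlt
    push_neg at hlt
    have hle1 : (N.filter (fun w => G.Adj w v)).card ≤ 1 := by omega
    obtain ⟨m₀, hm₀M, hvm₀⟩ := C1 v hv
    obtain ⟨w, hwN, hwv, hadjwv, _⟩ := C4 v hv m₀ hm₀M hvm₀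
    have hwB : w ∈ N.filter (fun w => G.Adj w v) := Finset.mem_filter.mpr ⟨hwN, hadjwv⟩
    obtain ⟨m, hmM, hvm, hwm⟩ := C2 v hv w hwN
    obtain ⟨w₁, hw₁N, _, hadj1, hadj2⟩ := C4 v hv m hmM hvm
    have hw₁B : w₁ ∈ N.filter (fun w => G.Adj w v) := Finset.mem_filter.mpr ⟨hw₁N, hadj1⟩
    have hww : w₁ = w := Finset.card_le_one.mp hle1 _ hw₁B _ hwB
    exact hwm (hww ▸ hadj2)
  -- Double counting
  have hdegsum : ∑ v ∈ N, G.degree v = ∑ x : V, (N.filter (fun v => G.Adj v x)).card := by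
    calc ∑ v ∈ N, G.degree v
        = ∑ v ∈ N, ∑ x : V, (if G.Adj v x then 1 else 0) := by
          refine Finset.sum_congr rfl fun v _ => ?_
          rw [show G.degree v = (Finset.univ.filter (G.Adj v)).card from by
                rw [← SimpleGraph.neighborFinset_eq_filter]; rfl,
              Finset.card_filter]
      _ = ∑ x : V, ∑ v ∈ N, (if G.Adj v x then 1 else 0) := Finset.sum_comm
      _ = ∑ x : V, (N.filter (fun v => G.Adj v x)).card := by
          refine Finset.sum_congr rfl fun x _ => (Finset.card_filter _ _).symm
  have hsplit : ∑ x ∈ M, (N.filter (fun v => G.Adj v x)).card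
      + ∑ x ∈ insert u N, (N.filter (fun v => G.Adj v x)).card
      = ∑ x : V, (N.filter (fun v => G.Adj v x)).card := by
    rw [hMdef]
    exact Finset.sum_sdiff (Finset.subset_univ _)
  have hgu : (N.filter (fun v => G.Adj v u)).card = 6 := by
    rw [Finset.filter_true_of_mem (fun v hv => ((hmemN v).mp hv).symm), hNcard]
  have hsumN : 12 ≤ ∑ x ∈ N, (N.filter (fun v => G.Adj v x)).card := by
    have h := Finset.card_nsmul_le_sum N (fun x => (N.filter (fun v => G.Adj v x)).card) 2 C6
    rw [hNcard] at h
    simpa using h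
  have hsumM : 21 ≤ ∑ x ∈ M, (N.filter (fun v => G.Adj v x)).card := by
    have h := Finset.card_nsmul_le_sum M (fun x => (N.filter (fun v => G.Adj v x)).card) 3 C5
    rw [hMcard] at h
    simpa using h
  rw [hdegsum, ← hsplit, Finset.sum_insert huN, hgu]
  omega
end

section
/- Every finite simple graph G on exactly 14 vertices whose number of edges is 42, 43, or 44 is 3-compliant; that is, G or its complement has a connected dominating set of cardinality at most 3. -/
open Finset

namespace Stmt9Aux

set_option linter.unusedSectionVars false

variable {V : Type*} [Fintype V] [DecidableEq V]

/-- `H` has no connected dominating set of cardinality at most 3. -/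
def NonC (H : SimpleGraph V) : Prop :=
  ∀ S : Finset V, S.card ≤ 3 → ¬ConnDomSet H S

/-- From non-compliance: any "cherry" `b ~ a ~ c` has a common non-neighbor avoiding all
three vertices. -/
lemma cherry {H : SimpleGraph V} (hNC : NonC H) {a b c : V}
    (hab : H.Adj a b) (hac : H.Adj a c) :
    ∃ x, x ≠ a ∧ x ≠ b ∧ x ≠ c ∧ ¬H.Adj a x ∧ ¬H.Adj b x ∧ ¬H.Adj c x := by
  classical
  set S : Finset V := {a, b, c} with hS
  have haS : a ∈ S := by simp [hS]
  have hbS : b ∈ S := by simp [hS]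
  have hcS : c ∈ S := by simp [hS]
  have hcard : S.card ≤ 3 := by
    refine le_trans (Finset.card_insert_le _ _) ?_
    have := Finset.card_insert_le c ({b} : Finset V)
    have h2 := Finset.card_insert_le b ({c} : Finset V)
    simp only [Finset.card_singleton] at h2
    omega
  have hconn : (H.induce (↑S : Set V)).Connected := by
    rw [SimpleGraph.connected_iff_exists_forall_reachable]
    refine ⟨⟨a, haS⟩, ?_⟩
    rintro ⟨z, hz⟩
    have hz' : z = a ∨ z = b ∨ z = c := by
      simpa [hS] using hz
    rcases hz' with h | h | h
    · subst h; exact SimpleGraph.Reachable.refl _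
    · subst h
      have hadj : (H.induce (↑S : Set V)).Adj ⟨a, haS⟩ ⟨z, hz⟩ := hab
      exact hadj.reachable
    · subst h
      have hadj : (H.induce (↑S : Set V)).Adj ⟨a, haS⟩ ⟨z, hz⟩ := hac
      exact hadj.reachable
  have hnd : ¬∀ v ∉ S, ∃ u ∈ S, H.Adj u v := by
    intro hdom
    exact hNC S hcard ⟨⟨a, haS⟩, hconn, hdom⟩
  push_neg at hnd
  obtain ⟨x, hxS, hx⟩ := hnd
  refine ⟨x, ?_, ?_, ?_, hx a haS, hx b hbS, hx c hcS⟩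
  · rintro rfl; exact hxS haS
  · rintro rfl; exact hxS hbS
  · rintro rfl; exact hxS hcS

/-- Complement version: any "co-cherry" has a common neighbor avoiding all three vertices. -/
lemma coCherry {H : SimpleGraph V} (hNCc : NonC Hᶜ) {a b c : V}
    (h1 : a ≠ b) (h2 : ¬H.Adj a b) (h3 : a ≠ c) (h4 : ¬H.Adj a c) :
    ∃ x, x ≠ a ∧ x ≠ b ∧ x ≠ c ∧ H.Adj a x ∧ H.Adj b x ∧ H.Adj c x := by
  obtain ⟨x, hxa, hxb, hxc, g1, g2, g3⟩ :=
    cherry hNCc ((SimpleGraph.compl_adj H a b).2 ⟨h1, h2⟩) ((SimpleGraph.compl_adj H a c).2 ⟨h3, h4⟩)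
  refine ⟨x, hxa, hxb, hxc, ?_, ?_, ?_⟩
  · by_contra h; exact g1 ((SimpleGraph.compl_adj H a x).2 ⟨Ne.symm hxa, h⟩)
  · by_contra h; exact g2 ((SimpleGraph.compl_adj H b x).2 ⟨Ne.symm hxb, h⟩)
  · by_contra h; exact g3 ((SimpleGraph.compl_adj H c x).2 ⟨Ne.symm hxc, h⟩)

/-- The non-neighbors (other than `v` itself) of `v`. -/
lemma mem_nonNbrs {H : SimpleGraph V} [DecidableRel H.Adj] {v m : V} :
    m ∈ (univ \ insert v (H.neighborFinset v)) ↔ m ≠ v ∧ ¬H.Adj v m := by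
  simp [SimpleGraph.mem_neighborFinset]

lemma card_nonNbrs {H : SimpleGraph V} [DecidableRel H.Adj] (v : V) :
    (univ \ insert v (H.neighborFinset v)).card = Fintype.card V - 1 - H.degree v := by
  rw [Finset.card_sdiff_of_subset (Finset.subset_univ _), Finset.card_insert_of_notMem
    (SimpleGraph.notMem_neighborFinset_self H v), Finset.card_univ,
    SimpleGraph.card_neighborFinset_eq_degree]
  omega

/-- Key workhorse: if `x, y` are non-neighbors of `v` such that every neighbor of `v`
misses `x` or misses `y`, we get a contradiction. -/
lemma keyPair {H : SimpleGraph V} [DecidableRel H.Adj] (hNCc : NonC Hᶜ)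
    (hV : Fintype.card V = 14) {v x y : V} (hdeg : H.degree v ≤ 11)
    (hx : x ≠ v) (hxa : ¬H.Adj v x) (hy : y ≠ v) (hya : ¬H.Adj v y)
    (hcov : ∀ u, H.Adj v u → ¬H.Adj u x ∨ ¬H.Adj u y) : False := by
  classical
  rcases eq_or_ne x y with rfl | hne
  · -- pick a second non-neighbor m' ≠ x of v
    have hcard : 1 ≤ ((univ \ insert v (H.neighborFinset v)).erase x).card := by
      have h1 := card_nonNbrs (H := H) v
      have h2 : x ∈ (univ \ insert v (H.neighborFinset v)) := mem_nonNbrs.2 ⟨hx, hxa⟩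
      rw [Finset.card_erase_of_mem h2]
      omega
    obtain ⟨m', hm'⟩ := Finset.card_pos.1 hcard
    have hm'x : m' ≠ x := (Finset.mem_erase.1 hm').1
    have hm'2 := mem_nonNbrs.1 (Finset.mem_of_mem_erase hm')
    obtain ⟨u, -, -, -, g1, g2, g3⟩ :=
      coCherry hNCc (Ne.symm hx) hxa (Ne.symm hm'2.1) hm'2.2
    rcases hcov u g1 with h | h
    · exact h g2.symm
    · exact h g2.symm
  · obtain ⟨u, -, -, -, g1, g2, g3⟩ := coCherry hNCc (Ne.symm hx) hxa (Ne.symm hy) hya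
    rcases hcov u g1 with h | h
    · exact h g2.symm
    · exact h g3.symm

/-- Every vertex of a 14-vertex graph which together with its complement admits no
connected dominating set of size `≤ 3` has degree at least 6. -/
lemma deg_ge_six {H : SimpleGraph V} [DecidableRel H.Adj] (hV : Fintype.card V = 14)
    (hNC : NonC H) (hNCc : NonC Hᶜ) (v : V) : 6 ≤ H.degree v := by
  classical
  by_contra hd
  push_neg at hd
  set N := H.neighborFinset v with hN
  have hNcard : N.card ≤ 5 := by
    rw [hN, SimpleGraph.card_neighborFinset_eq_degree]; omega
  have hmemN : ∀ u, u ∈ N ↔ H.Adj v u := fun u => SimpleGraph.mem_neighborFinset H v u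
  have hInter : ∀ u ∈ N, ∀ u' ∈ N,
      ∃ m, (m ≠ v ∧ ¬H.Adj v m) ∧ ¬H.Adj u m ∧ ¬H.Adj u' m := by
    intro u hu u' hu'
    obtain ⟨m, h1, _, _, h4, h5, h6⟩ := cherry hNC ((hmemN u).1 hu) ((hmemN u').1 hu')
    exact ⟨m, ⟨h1, h4⟩, h5, h6⟩
  have hKP : ∀ x y : V, (x ≠ v ∧ ¬H.Adj v x) → (y ≠ v ∧ ¬H.Adj v y) →
      (∀ u ∈ N, ¬H.Adj u x ∨ ¬H.Adj u y) → False := by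
    intro x y hx hy hcov
    exact keyPair hNCc hV (by omega) hx.1 hx.2 hy.1 hy.2
      (fun u hu => hcov u ((hmemN u).2 hu))
  have hMcard : (univ \ insert v N).card = 13 - N.card := by
    have h1 := card_nonNbrs (H := H) v
    rw [hV] at h1
    rw [hN, SimpleGraph.card_neighborFinset_eq_degree]
    exact h1
  have h05 : N.card = 0 ∨ N.card = 1 ∨ N.card = 2 ∨ N.card = 3 ∨ N.card = 4 ∨ N.card = 5 := by
    omega
  rcases h05 with h | h | h | h | h | h
  · -- degree 0
    have hM : 0 < (univ \ insert v N).card := by rw [hMcard, h]; omega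
    obtain ⟨x, hx⟩ := Finset.card_pos.1 hM
    have hNe : N = ∅ := Finset.card_eq_zero.1 h
    exact hKP x x (mem_nonNbrs.1 hx) (mem_nonNbrs.1 hx)
      (fun u hu => by rw [hNe] at hu; exact absurd hu (Finset.notMem_empty u))
  · -- degree 1
    obtain ⟨a, hNa⟩ := Finset.card_eq_one.1 h
    have haN : a ∈ N := by rw [hNa]; exact Finset.mem_singleton_self a
    obtain ⟨m, hm, hma, -⟩ := hInter a haN a haN
    refine hKP m m hm hm ?_
    intro u hu
    rw [hNa, Finset.mem_singleton] at hu
    subst hu; exact Or.inl hma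
  · -- degree 2
    obtain ⟨a, b, hab, hNab⟩ := Finset.card_eq_two.1 h
    have haN : a ∈ N := by rw [hNab]; exact Finset.mem_insert_self a {b}
    have hbN : b ∈ N := by rw [hNab]; exact Finset.mem_insert_of_mem (Finset.mem_singleton_self b)
    obtain ⟨m, hm, hma, hmb⟩ := hInter a haN b hbN
    refine hKP m m hm hm ?_
    intro u hu
    rw [hNab] at hu
    rcases Finset.mem_insert.1 hu with rfl | hu'
    · exact Or.inl hma
    · rw [Finset.mem_singleton] at hu'; subst hu'; exact Or.inl hmb
  · -- degree 3
    obtain ⟨a, b, c, hab, hac, hbc, hNeq⟩ := Finset.card_eq_three.1 h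
    have haN : a ∈ N := by rw [hNeq]; simp
    have hbN : b ∈ N := by rw [hNeq]; simp
    have hcN : c ∈ N := by rw [hNeq]; simp
    obtain ⟨x, hx, hxa, hxb⟩ := hInter a haN b hbN
    obtain ⟨y, hy, hya, hyc⟩ := hInter a haN c hcN
    refine hKP x y hx hy ?_
    intro u hu
    rw [hNeq] at hu
    rcases Finset.mem_insert.1 hu with rfl | hu'
    · exact Or.inl hxa
    rcases Finset.mem_insert.1 hu' with rfl | hu''
    · exact Or.inl hxb
    rw [Finset.mem_singleton] at hu''; subst hu''; exact Or.inr hyc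
  · -- degree 4
    obtain ⟨a, haN⟩ := Finset.card_pos.1 (show 0 < N.card by omega)
    have hNa : (N.erase a).card = 3 := by rw [Finset.card_erase_of_mem haN, h]
    obtain ⟨b, c, d, hbc, hbd, hcd, hNeq⟩ := Finset.card_eq_three.1 hNa
    have hbN : b ∈ N := Finset.mem_of_mem_erase (by rw [hNeq]; simp)
    have hcN : c ∈ N := Finset.mem_of_mem_erase (by rw [hNeq]; simp)
    have hdN : d ∈ N := Finset.mem_of_mem_erase (by rw [hNeq]; simp)
    obtain ⟨x, hx, hxa, hxb⟩ := hInter a haN b hbN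
    obtain ⟨y, hy, hyc, hyd⟩ := hInter c hcN d hdN
    refine hKP x y hx hy ?_
    intro u hu
    by_cases hua : u = a
    · subst hua; exact Or.inl hxa
    · have : u ∈ N.erase a := Finset.mem_erase.2 ⟨hua, hu⟩
      rw [hNeq] at this
      rcases Finset.mem_insert.1 this with rfl | hu'
      · exact Or.inl hxb
      rcases Finset.mem_insert.1 hu' with rfl | hu''
      · exact Or.inr hyc
      rw [Finset.mem_singleton] at hu''; subst hu''; exact Or.inr hyd
  · -- degree 5 : the interesting case
    set M := univ \ insert v N with hM
    have hMc : M.card = 8 := by rw [hM, hMcard, h]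
    -- every vertex of M is non-adjacent to at most 2 vertices of N
    have hMu : ∀ m ∈ M, (N.filter (fun u => ¬H.Adj u m)).card ≤ 2 := by
      intro m hm
      by_contra hmu
      push_neg at hmu
      obtain ⟨T, hTsub, hTcard⟩ :=
        Finset.exists_subset_card_eq (show 3 ≤ (N.filter (fun u => ¬H.Adj u m)).card by omega)
      have hTN : T ⊆ N := hTsub.trans (Finset.filter_subset _ _)
      have hNT : (N \ T).card = 2 := by rw [Finset.card_sdiff_of_subset hTN, h, hTcard]
      obtain ⟨l, r, hlr, hNTeq⟩ := Finset.card_eq_two.1 hNT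
      have hlN : l ∈ N :=
        (Finset.mem_sdiff.1 (hNTeq ▸ Finset.mem_insert_self l {r})).1
      have hrN : r ∈ N :=
        (Finset.mem_sdiff.1 (hNTeq ▸ Finset.mem_insert_of_mem (Finset.mem_singleton_self r))).1
      obtain ⟨y, hy, hly, hry⟩ := hInter l hlN r hrN
      refine hKP m y (mem_nonNbrs.1 hm) hy ?_
      intro u hu
      by_cases hu' : u ∈ T
      · exact Or.inl (Finset.mem_filter.1 (hTsub hu')).2
      · have hmem : u ∈ N \ T := Finset.mem_sdiff.2 ⟨hu, hu'⟩
        rw [hNTeq] at hmem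
        rcases Finset.mem_insert.1 hmem with rfl | h'
        · exact Or.inr hly
        · rw [Finset.mem_singleton] at h'; subst h'; exact Or.inr hry
    -- each pair of N has a joint non-neighbor in M; by the above this map is injective,
    -- which is impossible as `choose 5 2 = 10 > 8`.
    have hw : ∀ p : Finset V, ∃ m, p ∈ N.powersetCard 2 → (m ∈ M ∧ ∀ u ∈ p, ¬H.Adj u m) := by
      intro p
      by_cases hp : p ∈ N.powersetCard 2
      · obtain ⟨hsub, hcard2⟩ := Finset.mem_powersetCard.1 hp
        obtain ⟨a, b, hab, rfl⟩ := Finset.card_eq_two.1 hcard2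
        have haN : a ∈ N := hsub (by simp)
        have hbN : b ∈ N := hsub (by simp)
        obtain ⟨m, hm, hma, hmb⟩ := hInter a haN b hbN
        refine ⟨m, fun _ => ⟨mem_nonNbrs.2 hm, ?_⟩⟩
        intro u hu
        rcases Finset.mem_insert.1 hu with rfl | hu'
        · exact hma
        · rw [Finset.mem_singleton] at hu'; subst hu'; exact hmb
      · exact ⟨v, fun hc => absurd hc hp⟩
    choose f hf using hw
    have hcard := Finset.card_le_card_of_injOn f (fun p hp => (hf p hp).1) ?_
    · rw [Finset.card_powersetCard, h, hMc] at hcard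
      have : Nat.choose 5 2 = 10 := by decide
      omega
    · intro p hp q hq hfeq
      by_contra hne
      rw [Finset.mem_coe] at hp hq
      obtain ⟨hpsub, hpc⟩ := Finset.mem_powersetCard.1 hp
      obtain ⟨hqsub, hqc⟩ := Finset.mem_powersetCard.1 hq
      have hsubf : p ∪ q ⊆ N.filter (fun u => ¬H.Adj u (f p)) := by
        intro u hu
        rcases Finset.mem_union.1 hu with h' | h'
        · exact Finset.mem_filter.2 ⟨hpsub h', (hf p hp).2 u h'⟩
        · exact Finset.mem_filter.2 ⟨hqsub h', hfeq ▸ (hf q hq).2 u h'⟩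
      have hq_not_sub : ¬ q ⊆ p := by
        intro hqp
        exact hne ((Finset.eq_of_subset_of_card_le hqp (by omega)).symm)
      obtain ⟨a, haq, hap⟩ := Finset.not_subset.1 hq_not_sub
      have h3 : 3 ≤ (p ∪ q).card := by
        have hins : insert a p ⊆ p ∪ q := by
          intro z hz
          rcases Finset.mem_insert.1 hz with rfl | hz'
          · exact Finset.mem_union_right _ haq
          · exact Finset.mem_union_left _ hz'
        calc 3 = (insert a p).card := by rw [Finset.card_insert_of_notMem hap, hpc]
        _ ≤ (p ∪ q).card := Finset.card_le_card hins
      have hmu2 := hMu (f p) (hf p hp).1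
      have hff := Finset.card_le_card hsubf
      omega

/-- Any two non-adjacent vertices have at least 3 common neighbors. -/
lemma codeg_nonadj {H : SimpleGraph V} [DecidableRel H.Adj] (hV : Fintype.card V = 14)
    (hNC : NonC H) (hNCc : NonC Hᶜ) {v m : V} (hvm : v ≠ m) (hadj : ¬H.Adj v m) :
    3 ≤ (H.neighborFinset v ∩ H.neighborFinset m).card := by
  classical
  by_contra hlt
  push_neg at hlt
  set T := H.neighborFinset v ∩ H.neighborFinset m with hT
  have hTmem : ∀ u, u ∈ T ↔ H.Adj v u ∧ H.Adj m u := by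
    intro u
    rw [hT, Finset.mem_inter, SimpleGraph.mem_neighborFinset, SimpleGraph.mem_neighborFinset]
  -- T is nonempty
  obtain ⟨x0, -, -, -, g1, g2, -⟩ := coCherry hNCc hvm hadj hvm hadj
  have hx0 : x0 ∈ T := (hTmem x0).2 ⟨g1, g2⟩
  -- find x ≠ y in N(v) with T ⊆ {x, y}
  have hdeg := deg_ge_six hV hNC hNCc v
  have hNvcard : 6 ≤ (H.neighborFinset v).card := by
    rw [SimpleGraph.card_neighborFinset_eq_degree]; exact hdeg
  obtain ⟨x, y, hxy, hxN, hyN, hTsub⟩ :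
      ∃ x y, x ≠ y ∧ H.Adj v x ∧ H.Adj v y ∧ ∀ u ∈ T, u = x ∨ u = y := by
    have hT1 : T.card = 1 ∨ T.card = 2 := by
      have : 0 < T.card := Finset.card_pos.2 ⟨x0, hx0⟩
      omega
    rcases hT1 with h1 | h2
    · obtain ⟨x, hTx⟩ := Finset.card_eq_one.1 h1
      have hxT : x ∈ T := by rw [hTx]; exact Finset.mem_singleton_self x
      have hxadj : H.Adj v x := ((hTmem x).1 hxT).1
      have : 1 ≤ ((H.neighborFinset v).erase x).card := by
        rw [Finset.card_erase_of_mem ((SimpleGraph.mem_neighborFinset H v x).2 hxadj)]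
        omega
      obtain ⟨y, hy⟩ := Finset.card_pos.1 this
      refine ⟨x, y, (Finset.mem_erase.1 hy).1.symm, hxadj,
        (SimpleGraph.mem_neighborFinset H v y).1 (Finset.mem_of_mem_erase hy), ?_⟩
      intro u hu
      rw [hTx, Finset.mem_singleton] at hu
      exact Or.inl hu
    · obtain ⟨x, y, hxy, hTxy⟩ := Finset.card_eq_two.1 h2
      have hxT : x ∈ T := by rw [hTxy]; exact Finset.mem_insert_self x {y}
      have hyT : y ∈ T := by rw [hTxy]; exact Finset.mem_insert_of_mem (Finset.mem_singleton_self y)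
      refine ⟨x, y, hxy, ((hTmem x).1 hxT).1, ((hTmem y).1 hyT).1, ?_⟩
      intro u hu
      rw [hTxy] at hu
      rcases Finset.mem_insert.1 hu with rfl | hu'
      · exact Or.inl rfl
      · rw [Finset.mem_singleton] at hu'; exact Or.inr hu'
  -- a joint non-neighbor m₁ of v, x, y
  obtain ⟨m₁, hm₁v, -, -, e1, e2, e3⟩ := cherry hNC hxN hyN
  -- a joint neighbor u of v, m, m₁
  obtain ⟨u, -, -, -, f1, f2, f3⟩ := coCherry hNCc hvm hadj (Ne.symm hm₁v) e1
  have huT : u ∈ T := (hTmem u).2 ⟨f1, f2⟩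
  rcases hTsub u huT with rfl | rfl
  · exact e2 f3.symm
  · exact e3 f3.symm

/-- Any two adjacent vertices have at least 2 common neighbors. -/
lemma codeg_adj {H : SimpleGraph V} [DecidableRel H.Adj] (hV : Fintype.card V = 14)
    (hNC : NonC H) (hNCc : NonC Hᶜ) {u v : V} (huv : H.Adj u v) :
    2 ≤ (H.neighborFinset u ∩ H.neighborFinset v).card := by
  classical
  have hNCcc : NonC Hᶜᶜ := by rw [compl_compl]; exact hNC
  have hR : 3 ≤ (Hᶜ.neighborFinset u ∩ Hᶜ.neighborFinset v).card := by
    refine codeg_nonadj hV hNCc hNCcc huv.ne ?_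
    rw [SimpleGraph.compl_adj]
    rintro ⟨-, h⟩
    exact h huv
  set W := H.neighborFinset u ∩ H.neighborFinset v with hW
  set R := Hᶜ.neighborFinset u ∩ Hᶜ.neighborFinset v with hRdef
  have hWmem : ∀ w, w ∈ W ↔ H.Adj u w ∧ H.Adj v w := by
    intro w
    rw [hW, Finset.mem_inter, SimpleGraph.mem_neighborFinset, SimpleGraph.mem_neighborFinset]
  have hRmem : ∀ r, r ∈ R ↔ (r ≠ u ∧ ¬H.Adj u r) ∧ (r ≠ v ∧ ¬H.Adj v r) := by
    intro r
    rw [hRdef, Finset.mem_inter, SimpleGraph.mem_neighborFinset, SimpleGraph.mem_neighborFinset,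
      SimpleGraph.compl_adj, SimpleGraph.compl_adj]
    constructor
    · rintro ⟨⟨h1, h2⟩, h3, h4⟩; exact ⟨⟨h1.symm, h2⟩, h3.symm, h4⟩
    · rintro ⟨⟨h1, h2⟩, h3, h4⟩; exact ⟨⟨h1.symm, h2⟩, h3.symm, h4⟩
  have hrW : ∀ r ∈ R, ∃ w ∈ W, H.Adj r w := by
    intro r hr
    obtain ⟨⟨h1, h2⟩, h3, h4⟩ := (hRmem r).1 hr
    obtain ⟨x, -, -, -, f1, f2, f3⟩ :=
      coCherry hNCc h1 (fun ha => h2 ha.symm) h3 (fun ha => h4 ha.symm)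
    exact ⟨x, (hWmem x).2 ⟨f2, f3⟩, f1⟩
  have hwR : ∀ w ∈ W, ∃ r ∈ R, ¬H.Adj w r := by
    intro w hw
    obtain ⟨h1, h2⟩ := (hWmem w).1 hw
    obtain ⟨m, hmu, hmv, -, e1, e2, e3⟩ := cherry hNC huv h1
    exact ⟨m, (hRmem m).2 ⟨⟨hmu, e1⟩, hmv, e2⟩, e3⟩
  by_contra hlt
  push_neg at hlt
  have hWone : W.card ≤ 1 := by omega
  obtain ⟨r0, hr0⟩ := Finset.card_pos.1 (show 0 < R.card by omega)
  obtain ⟨w0, hw0, -⟩ := hrW r0 hr0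
  obtain ⟨r1, hr1, hnr1⟩ := hwR w0 hw0
  obtain ⟨w1, hw1, hadj1⟩ := hrW r1 hr1
  have : w1 = w0 := Finset.card_le_one.1 hWone w1 hw1 w0 hw0
  subst this
  exact hnr1 hadj1.symm

/-- Every vertex of degree 6 has at least 3 neighbors of degree 7. -/
lemma deg7_nbrs {H : SimpleGraph V} [DecidableRel H.Adj] (hV : Fintype.card V = 14)
    (hNC : NonC H) (hNCc : NonC Hᶜ)
    (hdeg : ∀ z, H.degree z = 6 ∨ H.degree z = 7) {v : V} (hv6 : H.degree v = 6) :
    3 ≤ ((H.neighborFinset v).filter (fun u => H.degree u = 7)).card := by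
  classical
  set N := H.neighborFinset v with hN
  have hNsub : N ⊆ univ.erase v := by
    intro u hu
    refine Finset.mem_erase.2 ⟨?_, Finset.mem_univ u⟩
    intro h
    exact H.irrefl (h ▸ (SimpleGraph.mem_neighborFinset H v u).1 hu)
  have hNcard : N.card = 6 := by
    rw [hN, SimpleGraph.card_neighborFinset_eq_degree, hv6]
  have hid : ∑ z ∈ univ.erase v, (N ∩ H.neighborFinset z).card
      = ∑ u ∈ N, (H.degree u - 1) := by
    have h1 : ∀ z, (N ∩ H.neighborFinset z).card = ∑ u ∈ N, if H.Adj z u then 1 else 0 := by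
      intro z
      rw [← Finset.card_filter]
      congr 1
      ext u
      simp only [Finset.mem_inter, Finset.mem_filter, SimpleGraph.mem_neighborFinset]
    calc ∑ z ∈ univ.erase v, (N ∩ H.neighborFinset z).card
        = ∑ z ∈ univ.erase v, ∑ u ∈ N, if H.Adj z u then 1 else 0 :=
          Finset.sum_congr rfl (fun z _ => h1 z)
      _ = ∑ u ∈ N, ∑ z ∈ univ.erase v, if H.Adj z u then 1 else 0 := Finset.sum_comm
      _ = ∑ u ∈ N, (H.degree u - 1) := by
          refine Finset.sum_congr rfl ?_
          intro u hu
          rw [← Finset.card_filter]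
          have hfe : (univ.erase v).filter (fun z => H.Adj z u) = (H.neighborFinset u).erase v := by
            ext z
            simp only [Finset.mem_filter, Finset.mem_erase, Finset.mem_univ, and_true, true_and,
              SimpleGraph.mem_neighborFinset]
            constructor
            · rintro ⟨h1', h2'⟩; exact ⟨h1', h2'.symm⟩
            · rintro ⟨h1', h2'⟩; exact ⟨h1', h2'.symm⟩
          rw [hfe, Finset.card_erase_of_mem, SimpleGraph.card_neighborFinset_eq_degree]
          exact (SimpleGraph.mem_neighborFinset H u v).2
            (((SimpleGraph.mem_neighborFinset H v u).1 hu).symm)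
  have hsplit : ∑ z ∈ (univ.erase v) \ N, (N ∩ H.neighborFinset z).card
      + ∑ z ∈ N, (N ∩ H.neighborFinset z).card
      = ∑ z ∈ univ.erase v, (N ∩ H.neighborFinset z).card :=
    Finset.sum_sdiff hNsub
  have hlow1 : ∀ z ∈ N, 2 ≤ (N ∩ H.neighborFinset z).card := by
    intro z hz
    exact codeg_adj hV hNC hNCc ((SimpleGraph.mem_neighborFinset H v z).1 hz)
  have hlow2 : ∀ z ∈ (univ.erase v) \ N, 3 ≤ (N ∩ H.neighborFinset z).card := by
    intro z hz
    obtain ⟨hz1, hz2⟩ := Finset.mem_sdiff.1 hz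
    have hzv : z ≠ v := (Finset.mem_erase.1 hz1).1
    have hnadj : ¬H.Adj v z := fun h => hz2 ((SimpleGraph.mem_neighborFinset H v z).2 h)
    exact codeg_nonadj hV hNC hNCc (Ne.symm hzv) hnadj
  have hcard2 : ((univ.erase v) \ N).card = 7 := by
    rw [Finset.card_sdiff_of_subset hNsub, Finset.card_erase_of_mem (Finset.mem_univ v), Finset.card_univ,
      hV, hNcard]
  have hsum1 : N.card • 2 ≤ ∑ z ∈ N, (N ∩ H.neighborFinset z).card :=
    Finset.card_nsmul_le_sum _ _ _ hlow1
  have hsum2 : ((univ.erase v) \ N).card • 3 ≤ ∑ z ∈ (univ.erase v) \ N, (N ∩ H.neighborFinset z).card :=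
    Finset.card_nsmul_le_sum _ _ _ hlow2
  rw [hNcard, smul_eq_mul] at hsum1
  rw [hcard2, smul_eq_mul] at hsum2
  have hup : ∑ u ∈ N, (H.degree u - 1)
      = 5 * N.card + (N.filter (fun u => H.degree u = 7)).card := by
    have h2 : ∀ u ∈ N, H.degree u - 1 = 5 + (if H.degree u = 7 then 1 else 0) := by
      intro u _
      rcases hdeg u with h' | h' <;> rw [h'] <;> simp
    rw [Finset.sum_congr rfl h2, Finset.sum_add_distrib, Finset.sum_const, smul_eq_mul,
      mul_comm, ← Finset.card_filter]
  rw [hup, hNcard] at hid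
  omega

end Stmt9Aux

theorem stmt9 {V : Type*} [Fintype V] [DecidableEq V] (G : SimpleGraph V)
    [DecidableRel G.Adj] (hV : Fintype.card V = 14)
    (hE : G.edgeFinset.card = 42 ∨ G.edgeFinset.card = 43 ∨ G.edgeFinset.card = 44) :
    Compliant G 3 := by
  classical
  by_contra hcompl
  have hNC : Stmt9Aux.NonC G := fun S h1 h2 => hcompl (Or.inl ⟨S, h1, h2⟩)
  have hNCc : Stmt9Aux.NonC Gᶜ := fun S h1 h2 => hcompl (Or.inr ⟨S, h1, h2⟩)
  have hNCcc : Stmt9Aux.NonC Gᶜᶜ := by rw [compl_compl]; exact hNC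
  have hdeg6 : ∀ v, 6 ≤ G.degree v := Stmt9Aux.deg_ge_six hV hNC hNCc
  have hdeg6c : ∀ v, 6 ≤ Gᶜ.degree v := Stmt9Aux.deg_ge_six hV hNCc hNCcc
  have hdeg : ∀ v, G.degree v = 6 ∨ G.degree v = 7 := by
    intro v
    have h1 := hdeg6 v
    have h2 := hdeg6c v
    rw [SimpleGraph.degree_compl, hV] at h2
    omega
  set A := univ.filter (fun v => G.degree v = 6) with hA
  set B := univ.filter (fun v => G.degree v = 7) with hB
  have hBalt : B = univ.filter (fun v => ¬ G.degree v = 6) := by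
    ext v
    simp only [hB, Finset.mem_filter, Finset.mem_univ, true_and]
    constructor
    · intro h; omega
    · intro h; rcases hdeg v with h' | h' <;> omega
  have hAB : A.card + B.card = 14 := by
    rw [hA, hBalt, Finset.card_filter_add_card_filter_not, Finset.card_univ, hV]
  -- double counting edges between A and B
  have hcnt : ∀ v ∈ A, (B.filter (fun w => G.Adj v w)).card
      = ((G.neighborFinset v).filter (fun u => G.degree u = 7)).card := by
    intro v _
    congr 1
    ext u
    simp only [hB, Finset.mem_filter, Finset.mem_univ, true_and,
      SimpleGraph.mem_neighborFinset]
    tauto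
  have hEswap : ∑ v ∈ A, (B.filter (fun w => G.Adj v w)).card
      = ∑ w ∈ B, (A.filter (fun x => G.Adj x w)).card := by
    have e1 : ∀ v ∈ A, (B.filter (fun w => G.Adj v w)).card
        = ∑ w ∈ B, if G.Adj v w then 1 else 0 := by
      intro v _; rw [← Finset.card_filter]
    have e2 : ∀ w ∈ B, (A.filter (fun x => G.Adj x w)).card
        = ∑ x ∈ A, if G.Adj x w then 1 else 0 := by
      intro w _; rw [← Finset.card_filter]
    rw [Finset.sum_congr rfl e1, Finset.sum_congr rfl e2]
    exact Finset.sum_comm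
  have hlowA : ∀ v ∈ A, 3 ≤ (B.filter (fun w => G.Adj v w)).card := by
    intro v hv
    rw [hcnt v hv]
    have hv6 : G.degree v = 6 := (Finset.mem_filter.1 hv).2
    exact Stmt9Aux.deg7_nbrs hV hNC hNCc hdeg hv6
  have hupB : ∀ w ∈ B, (A.filter (fun x => G.Adj x w)).card ≤ 7 := by
    intro w hw
    have hsub : A.filter (fun x => G.Adj x w) ⊆ G.neighborFinset w := by
      intro x hx
      exact (SimpleGraph.mem_neighborFinset G w x).2 ((Finset.mem_filter.1 hx).2).symm
    calc (A.filter (fun x => G.Adj x w)).card ≤ (G.neighborFinset w).card :=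
        Finset.card_le_card hsub
      _ = G.degree w := SimpleGraph.card_neighborFinset_eq_degree G w
      _ ≤ 7 := by rcases hdeg w with h' | h' <;> omega
  have h3A : A.card • 3 ≤ ∑ v ∈ A, (B.filter (fun w => G.Adj v w)).card :=
    Finset.card_nsmul_le_sum _ _ _ hlowA
  have h7B : ∑ w ∈ B, (A.filter (fun x => G.Adj x w)).card ≤ B.card • 7 :=
    Finset.sum_le_card_nsmul _ _ _ hupB
  rw [smul_eq_mul] at h3A
  rw [smul_eq_mul] at h7B
  rw [hEswap] at h3A
  -- handshake
  have hsum : ∑ v, G.degree v = 2 * G.edgeFinset.card :=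
    SimpleGraph.sum_degrees_eq_twice_card_edges G
  have hsum2 : ∑ v, G.degree v = 6 * A.card + 7 * B.card := by
    rw [← Finset.sum_filter_add_sum_filter_not univ (fun v => G.degree v = 6)]
    have p1 : ∑ v ∈ univ.filter (fun v => G.degree v = 6), G.degree v
        = 6 * (univ.filter (fun v => G.degree v = 6)).card := by
      rw [Finset.sum_congr rfl (fun v hv => (Finset.mem_filter.1 hv).2), Finset.sum_const,
        smul_eq_mul, mul_comm]
    have p2 : ∑ v ∈ univ.filter (fun v => ¬G.degree v = 6), G.degree v
        = 7 * (univ.filter (fun v => ¬G.degree v = 6)).card := by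
      have : ∀ v ∈ univ.filter (fun v => ¬G.degree v = 6), G.degree v = 7 := by
        intro v hv
        have := (Finset.mem_filter.1 hv).2
        rcases hdeg v with h' | h' <;> omega
      rw [Finset.sum_congr rfl this, Finset.sum_const, smul_eq_mul, mul_comm]
    rw [p1, p2, ← hA, ← hBalt]
  have hle : G.edgeFinset.card ≤ 44 := by rcases hE with h | h | h <;> omega
  omega
end

section
/- Let G be a finite simple graph on exactly 15 vertices and let u be a vertex of G with degree 6. If G is 3-non-compliant, then the sum of the degrees (in G) of the neighbors of u is at least 42, i.e. ∑_{v ∈ N_G(u)} deg_G(v) ≥ 42. -/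
open Finset

lemma star_connected {V : Type*} [DecidableEq V] (G : SimpleGraph V) {a b c : V}
    (hab : G.Adj a b) (hac : G.Adj a c) :
    (G.induce (↑({a, b, c} : Finset V) : Set V)).Connected := by
  set S : Set V := ↑({a, b, c} : Finset V) with hS
  have ha : a ∈ S := by simp [hS]
  have key : ∀ x : S, (G.induce S).Reachable ⟨a, ha⟩ x := by
    rintro ⟨x, hx⟩
    have hx' : x = a ∨ x = b ∨ x = c := by simpa [hS] using hx
    rcases hx' with rfl | rfl | rfl
    · rfl
    · exact SimpleGraph.Adj.reachable (by simpa using hab)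
    · exact SimpleGraph.Adj.reachable (by simpa using hac)
  constructor
  intro x y
  exact (key x).symm.trans (key y)

lemma star_fail_s12 {V : Type*} [DecidableEq V] {G : SimpleGraph V}
    (h : ∀ S : Finset V, S.card ≤ 3 → ¬ ConnDomSet G S) {a b c : V}
    (hab : G.Adj a b) (hac : G.Adj a c) :
    ∃ t, t ∉ ({a, b, c} : Finset V) ∧ ¬ G.Adj a t ∧ ¬ G.Adj b t ∧ ¬ G.Adj c t := by
  have hcard : ({a, b, c} : Finset V).card ≤ 3 :=
    calc ({a, b, c} : Finset V).card ≤ ({b, c} : Finset V).card + 1 := card_insert_le _ _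
      _ ≤ (({c} : Finset V).card + 1) + 1 := Nat.add_le_add_right (card_insert_le _ _) 1
      _ = 3 := by simp
  have hthis := h _ hcard
  rw [ConnDomSet] at hthis
  push_neg at hthis
  have hne : ({a, b, c} : Finset V).Nonempty := ⟨a, by simp⟩
  have hconn := star_connected G hab hac
  obtain ⟨t, ht, hdom⟩ := hthis hne hconn
  exact ⟨t, ht, hdom a (by simp), hdom b (by simp), hdom c (by simp)⟩

theorem stmt12 {V : Type*} [Fintype V] [DecidableEq V] (G : SimpleGraph V)
    [DecidableRel G.Adj] (hV : Fintype.card V = 15) (u : V)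
    (hdeg : G.degree u = 6) (hG : ¬ Compliant G 3) :
    42 ≤ ∑ v ∈ G.neighborFinset u, G.degree v := by
  classical
  set N : Finset V := G.neighborFinset u with hNdef
  have hN : N.card = 6 := hdeg
  set M : Finset V := Finset.univ \ insert u N with hMdef
  have huN : u ∉ N := by simp [hNdef]
  have hMmem : ∀ w, w ∈ M ↔ (w ≠ u ∧ ¬ G.Adj u w) := by
    intro w
    simp [hMdef, hNdef]
  have hM : M.card = 8 := by
    rw [hMdef, card_sdiff_of_subset (subset_univ _), card_insert_of_notMem huN, hN, card_univ, hV]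
  have hfG : ∀ S : Finset V, S.card ≤ 3 → ¬ ConnDomSet G S :=
    fun S hc hS => hG (Or.inl ⟨S, hc, hS⟩)
  have hfC : ∀ S : Finset V, S.card ≤ 3 → ¬ ConnDomSet Gᶜ S :=
    fun S hc hS => hG (Or.inr ⟨S, hc, hS⟩)
  have starC : ∀ a b c : V, Gᶜ.Adj a b → Gᶜ.Adj a c →
      ∃ t, t ∉ ({a, b, c} : Finset V) ∧ G.Adj a t ∧ G.Adj b t ∧ G.Adj c t := by
    intro a b c hab hac
    obtain ⟨t, ht, h1, h2, h3⟩ := star_fail_s12 hfC hab hac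
    have hta : t ≠ a := fun h => ht (by simp [h])
    have htb : t ≠ b := fun h => ht (by simp [h])
    have htc : t ≠ c := fun h => ht (by simp [h])
    refine ⟨t, ht, ?_, ?_, ?_⟩
    · by_contra hA; exact h1 ⟨hta.symm, hA⟩
    · by_contra hA; exact h2 ⟨htb.symm, hA⟩
    · by_contra hA; exact h3 ⟨htc.symm, hA⟩
  -- T w = neighbors of w inside N
  set T : V → Finset V := fun w => N.filter (fun y => G.Adj w y) with hTdef
  set Mx : V → Finset V := fun x => M.filter (fun y => G.Adj x y) with hMxdef
  have hTN : ∀ w, T w ⊆ N := fun w => filter_subset _ _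
  have hmemT : ∀ w y, y ∈ T w ↔ (y ∈ N ∧ G.Adj w y) := by intro w y; simp [hTdef]
  have hNadj : ∀ x, x ∈ N ↔ G.Adj u x := by intro x; simp [hNdef]
  -- F1
  have F1 : ∀ w ∈ M, ∀ w' ∈ M, ∃ t, t ∈ T w ∧ t ∈ T w' := by
    intro w hw w' hw'
    have hcw : Gᶜ.Adj u w := by
      rw [SimpleGraph.compl_adj]
      exact ⟨fun h => ((hMmem w).1 hw).1 h.symm, ((hMmem w).1 hw).2⟩
    have hcw' : Gᶜ.Adj u w' := by
      rw [SimpleGraph.compl_adj]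
      exact ⟨fun h => ((hMmem w').1 hw').1 h.symm, ((hMmem w').1 hw').2⟩
    obtain ⟨t, _, h1, h2, h3⟩ := starC u w w' hcw hcw'
    exact ⟨t, (hmemT w t).2 ⟨(hNadj t).2 h1, h2⟩, (hmemT w' t).2 ⟨(hNadj t).2 h1, h3⟩⟩
  -- F2
  have F2 : ∀ x ∈ N, ∀ y ∈ N, ∃ w ∈ M, ¬ G.Adj x w ∧ ¬ G.Adj y w := by
    intro x hx y hy
    obtain ⟨t, ht, h1, h2, h3⟩ := star_fail_s12 hfG ((hNadj x).1 hx) ((hNadj y).1 hy)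
    have htu : t ≠ u := fun h => ht (by simp [h])
    exact ⟨t, (hMmem t).2 ⟨htu, h1⟩, h2, h3⟩
  -- F3
  have F3 : ∀ w ∈ M, ∀ x ∈ N, ¬ G.Adj x w → ∃ t, t ∈ T w ∧ G.Adj x t := by
    intro w hw x hx hxw
    have hwu : Gᶜ.Adj w u := by
      rw [SimpleGraph.compl_adj]
      exact ⟨((hMmem w).1 hw).1, fun h => ((hMmem w).1 hw).2 h.symm⟩
    have hwx : Gᶜ.Adj w x := by
      rw [SimpleGraph.compl_adj]
      refine ⟨fun h => ?_, fun h => hxw h.symm⟩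
      subst h
      exact ((hMmem w).1 hw).2 ((hNadj w).1 hx)
    obtain ⟨t, _, h1, h2, h3⟩ := starC w u x hwu hwx
    exact ⟨t, (hmemT w t).2 ⟨(hNadj t).2 h2, h1⟩, h3⟩
  -- Step A : each T w (w ∈ M) has card ≥ 3
  have stepA : ∀ w ∈ M, 3 ≤ (T w).card := by
    intro w hw
    by_contra hlt
    push_neg at hlt
    have h2 : (T w).card ≤ 2 := Nat.lt_succ_iff.mp hlt
    obtain ⟨t0, ht0, _⟩ := F1 w hw w hw
    have hxy : ∃ x y, x ∈ N ∧ y ∈ N ∧ T w ⊆ {x, y} := by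
      by_cases hy : ∃ y ∈ T w, y ≠ t0
      · obtain ⟨y, hyw, hyne⟩ := hy
        refine ⟨t0, y, hTN w ht0, hTN w hyw, ?_⟩
        intro z hz
        by_contra hzmem
        simp only [mem_insert, mem_singleton, not_or] at hzmem
        have hsub : ({z, t0, y} : Finset V) ⊆ T w := by
          intro p hp
          simp only [mem_insert, mem_singleton] at hp
          rcases hp with rfl | rfl | rfl <;> assumption
        have hc3 : ({z, t0, y} : Finset V).card = 3 := by
          rw [card_insert_of_notMem (by simp [hzmem.1, hzmem.2]),
            card_insert_of_notMem (by simp [hyne.symm]), card_singleton]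
        have := card_le_card hsub
        omega
      · push_neg at hy
        refine ⟨t0, t0, hTN w ht0, hTN w ht0, ?_⟩
        intro z hz
        simp [hy z hz]
    obtain ⟨x, y, hx, hy, hsub⟩ := hxy
    obtain ⟨w', hw', hxw', hyw'⟩ := F2 x hx y hy
    obtain ⟨t, htw, htw'⟩ := F1 w hw w' hw'
    have hadj : G.Adj w' t := ((hmemT w' t).1 htw').2
    have hmem := hsub htw
    simp only [mem_insert, mem_singleton] at hmem
    rcases hmem with rfl | rfl
    · exact hxw' hadj.symm
    · exact hyw' hadj.symm
  -- Step B : each x ∈ N has ≥ 2 neighbors inside N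
  have stepB : ∀ x ∈ N, 2 ≤ (T x).card := by
    intro x hx
    obtain ⟨w, hw, hxw, _⟩ := F2 x hx x hx
    obtain ⟨z, hzw, hxz⟩ := F3 w hw x hx hxw
    have hzN : z ∈ N := hTN w hzw
    obtain ⟨w', hw', hxw', hzw'⟩ := F2 x hx z hzN
    obtain ⟨t, htw', hxt⟩ := F3 w' hw' x hx hxw'
    have htN : t ∈ N := hTN w' htw'
    have hne : z ≠ t := by
      rintro rfl
      exact hzw' ((hmemT w' z).1 htw').2.symm
    have hsub : ({z, t} : Finset V) ⊆ T x := by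
      intro p hp
      simp only [mem_insert, mem_singleton] at hp
      rcases hp with hp | hp
      · rw [hp]; exact (hmemT x z).2 ⟨hzN, hxz⟩
      · rw [hp]; exact (hmemT x t).2 ⟨htN, hxt⟩
    calc 2 = ({z, t} : Finset V).card := (card_pair hne).symm
      _ ≤ (T x).card := card_le_card hsub
  -- degree lower bound pointwise
  have degbound : ∀ x ∈ N, 1 + (T x).card + (Mx x).card ≤ G.degree x := by
    intro x hx
    have hadjux : G.Adj u x := (hNadj x).1 hx
    have hsub : insert u (T x ∪ Mx x) ⊆ G.neighborFinset x := by
      intro p hp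
      rw [SimpleGraph.mem_neighborFinset]
      rcases mem_insert.1 hp with rfl | hp'
      · exact hadjux.symm
      · rcases mem_union.1 hp' with h | h
        · exact ((hmemT x p).1 h).2
        · exact (mem_filter.1 h).2
    have hdisj : Disjoint (T x) (Mx x) := by
      have hd : Disjoint N M := by
        rw [hMdef]
        exact (sdiff_disjoint).symm.mono_left (subset_insert u N)
      exact hd.mono (hTN x) (filter_subset _ _)
    have hunotin : u ∉ T x ∪ Mx x := by
      rw [mem_union]
      rintro (h | h)
      · exact huN (hTN x h)
      · exact ((hMmem u).1 (filter_subset _ _ h)).1 rfl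
    have hcard : (insert u (T x ∪ Mx x)).card = 1 + (T x).card + (Mx x).card := by
      rw [card_insert_of_notMem hunotin, card_union_of_disjoint hdisj]
      omega
    calc 1 + (T x).card + (Mx x).card = (insert u (T x ∪ Mx x)).card := hcard.symm
      _ ≤ (G.neighborFinset x).card := card_le_card hsub
      _ = G.degree x := rfl
  -- double counting
  have hswap : ∑ x ∈ N, (Mx x).card = ∑ w ∈ M, (T w).card := by
    have h1 : ∀ x, (Mx x).card = ∑ w ∈ M, (if G.Adj x w then 1 else 0) := by
      intro x; rw [show Mx x = M.filter (fun y => G.Adj x y) from rfl, card_filter]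
    have h2 : ∀ w, (T w).card = ∑ x ∈ N, (if G.Adj x w then 1 else 0) := by
      intro w
      rw [show T w = N.filter (fun y => G.Adj w y) from rfl, card_filter]
      refine Finset.sum_congr rfl (fun x _ => ?_)
      by_cases h : G.Adj w x
      · simp [h, h.symm]
      · have h' : ¬ G.Adj x w := fun hh => h hh.symm
        simp [h, h']
    simp only [h1, h2]
    exact Finset.sum_comm
  have hbound1 : (18 : ℕ) ≤ ∑ x ∈ N, (1 + (T x).card) := by
    calc (18 : ℕ) = N.card * 3 := by rw [hN]
      _ = ∑ _x ∈ N, 3 := by rw [Finset.sum_const, smul_eq_mul]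
      _ ≤ ∑ x ∈ N, (1 + (T x).card) := Finset.sum_le_sum (fun x hx => by
          have := stepB x hx; omega)
  have hbound2 : (24 : ℕ) ≤ ∑ w ∈ M, (T w).card := by
    calc (24 : ℕ) = M.card * 3 := by rw [hM]
      _ = ∑ _w ∈ M, 3 := by rw [Finset.sum_const, smul_eq_mul]
      _ ≤ ∑ w ∈ M, (T w).card := Finset.sum_le_sum (fun w hw => stepA w hw)
  calc (42 : ℕ) = 18 + 24 := by norm_num
    _ ≤ (∑ x ∈ N, (1 + (T x).card)) + ∑ w ∈ M, (T w).card := Nat.add_le_add hbound1 hbound2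
    _ = (∑ x ∈ N, (1 + (T x).card)) + ∑ x ∈ N, (Mx x).card := by rw [hswap]
    _ = ∑ x ∈ N, (1 + (T x).card + (Mx x).card) := by rw [← Finset.sum_add_distrib]
    _ ≤ ∑ x ∈ N, G.degree x := Finset.sum_le_sum degbound
end

section
/- Let G be a finite simple graph on exactly 15 vertices whose number of edges is 49, 50, 51, or 52. Then there exists H equal to G or to the complement of G, and a vertex v of H, such that the sum of the degrees (in H) of the neighbors of v is at most 45, i.e. ∑_{u ∈ N_H(v)} deg_H(u) ≤ 45. -/
lemma aux_sum_deg_le {V : Type*} [Fintype V] (H : SimpleGraph V) [DecidableRel H.Adj]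
    (M : ℕ) (hM : ∀ u, H.degree u ≤ M) (v : V) :
    ∑ u ∈ H.neighborFinset v, H.degree u ≤ H.degree v * M := by
  calc ∑ u ∈ H.neighborFinset v, H.degree u ≤ ∑ _u ∈ H.neighborFinset v, M :=
        Finset.sum_le_sum fun u _ => hM u
    _ = H.degree v * M := by rw [Finset.sum_const, smul_eq_mul]; rfl

lemma aux_part {V : Type*} [Fintype V] [DecidableEq V] (G : SimpleGraph V) [DecidableRel G.Adj]
    (f : V → ℕ) (v : V) :
    ∑ u, f u = f v + (∑ u ∈ G.neighborFinset v, f u) + ∑ u ∈ Gᶜ.neighborFinset v, f u := by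
  have h0 : Gᶜ.neighborFinset v = (G.neighborFinset v)ᶜ.erase v := by
    rw [SimpleGraph.neighborFinset_compl, Finset.erase_eq]
  have hv : v ∈ (G.neighborFinset v)ᶜ := by simp
  have h1 : f v + ∑ u ∈ (G.neighborFinset v)ᶜ.erase v, f u
      = ∑ u ∈ (G.neighborFinset v)ᶜ, f u := Finset.add_sum_erase _ f hv
  have h2 : (∑ u ∈ G.neighborFinset v, f u) + ∑ u ∈ (G.neighborFinset v)ᶜ, f u = ∑ u, f u :=
    Finset.sum_add_sum_compl _ f
  rw [h0]; omega

lemma aux_swap {V : Type*} [Fintype V] [DecidableEq V] (G : SimpleGraph V) [DecidableRel G.Adj]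
    (T6 T8 : Finset V) :
    ∑ v ∈ T6, (G.neighborFinset v ∩ T8).card = ∑ w ∈ T8, (G.neighborFinset w ∩ T6).card := by
  have h : ∀ (T : Finset V), ∀ v, (G.neighborFinset v ∩ T).card
      = ∑ w ∈ T, if G.Adj v w then 1 else 0 := by
    intro T v
    rw [← Finset.card_filter]
    congr 1
    ext w
    simp [Finset.mem_inter, SimpleGraph.mem_neighborFinset, and_comm]
  simp only [h]
  rw [Finset.sum_comm]
  exact Finset.sum_congr rfl fun w _ => Finset.sum_congr rfl fun v _ => by simp [G.adj_comm]

theorem stmt15 {V : Type*} [Fintype V] [DecidableEq V] (G : SimpleGraph V)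
    [DecidableRel G.Adj] (hV : Fintype.card V = 15)
    (hE : G.edgeFinset.card = 49 ∨ G.edgeFinset.card = 50 ∨
      G.edgeFinset.card = 51 ∨ G.edgeFinset.card = 52) :
    (∃ v : V, ∑ u ∈ G.neighborFinset v, G.degree u ≤ 45) ∨
    (∃ v : V, ∑ u ∈ Gᶜ.neighborFinset v, Gᶜ.degree u ≤ 45) := by
  by_contra hcon
  push_neg at hcon
  obtain ⟨h1, h2⟩ := hcon
  have hd14 : ∀ u, G.degree u ≤ 14 := fun u => by
    have := G.degree_lt_card_verts u; omega
  have hdc : ∀ u, Gᶜ.degree u = 14 - G.degree u := fun u => by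
    rw [SimpleGraph.degree_compl, hV]
  have hdc14 : ∀ u, Gᶜ.degree u ≤ 14 := fun u => by rw [hdc]; omega
  have hx : ∑ v, G.degree v = 2 * G.edgeFinset.card :=
    G.sum_degrees_eq_twice_card_edges
  -- bootstrap: all degrees in [6,8]
  have step : ∀ M : ℕ, (∀ u, G.degree u ≤ M) → (∀ u, Gᶜ.degree u ≤ M) →
      (∀ u, 46 ≤ M * G.degree u) ∧ (∀ u, 46 ≤ M * Gᶜ.degree u) := by
    intro M hM hM'
    constructor
    · intro u
      have := aux_sum_deg_le G M hM u
      have := h1 u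
      have := mul_comm (G.degree u) M
      omega
    · intro u
      have := aux_sum_deg_le Gᶜ M hM' u
      have := h2 u
      have := mul_comm (Gᶜ.degree u) M
      omega
  have r1 := step 14 hd14 hdc14
  have b1 : ∀ u, 4 ≤ G.degree u ∧ G.degree u ≤ 10 := fun u => by
    have := r1.1 u; have := r1.2 u; have := hdc u; have := hd14 u; omega
  have r2 := step 10 (fun u => (b1 u).2) (fun u => by have := hdc u; have := (b1 u).1; omega)
  have b2 : ∀ u, 5 ≤ G.degree u ∧ G.degree u ≤ 9 := fun u => by
    have := r2.1 u; have := r2.2 u; have := hdc u; have := hd14 u; omega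
  have r3 := step 9 (fun u => (b2 u).2) (fun u => by have := hdc u; have := (b2 u).1; omega)
  have b3 : ∀ u, 6 ≤ G.degree u ∧ G.degree u ≤ 8 := fun u => by
    have := r3.1 u; have := r3.2 u; have := hdc u; have := hd14 u; omega
  -- lower bound on neighborhood degree-sum of a degree-8 vertex
  have hS8 : ∀ w, G.degree w = 8 → (∑ v, G.degree v) ≤ 46 +
      ∑ u ∈ G.neighborFinset w, G.degree u := by
    intro w hw
    have hp := aux_part G (fun u => G.degree u) w
    have hid : (∑ u ∈ Gᶜ.neighborFinset w, Gᶜ.degree u)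
        + (∑ u ∈ Gᶜ.neighborFinset w, G.degree u) = 14 * (14 - G.degree w) := by
      rw [← Finset.sum_add_distrib]
      have he : ∀ u ∈ Gᶜ.neighborFinset w, Gᶜ.degree u + G.degree u = 14 := fun u _ => by
        rw [hdc u]; have := hd14 u; omega
      rw [Finset.sum_congr rfl he, Finset.sum_const, smul_eq_mul]
      have hc : (Gᶜ.neighborFinset w).card = Gᶜ.degree w := rfl
      rw [hc, hdc w, mul_comm]
    have := h2 w
    omega
  -- classes
  set T6 : Finset V := Finset.univ.filter (fun v => G.degree v = 6) with hT6
  set T7 : Finset V := Finset.univ.filter (fun v => G.degree v = 7) with hT7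
  set T8 : Finset V := Finset.univ.filter (fun v => G.degree v = 8) with hT8
  have hmem6 : ∀ v, v ∈ T6 ↔ G.degree v = 6 := fun v => by simp [hT6]
  have hmem7 : ∀ v, v ∈ T7 ↔ G.degree v = 7 := fun v => by simp [hT7]
  have hmem8 : ∀ v, v ∈ T8 ↔ G.degree v = 8 := fun v => by simp [hT8]
  have hdisj67 : Disjoint T6 T7 := by
    rw [Finset.disjoint_left]; intro v hv hv'
    rw [hmem6] at hv; rw [hmem7] at hv'; omega
  have hdisj678 : Disjoint (T6 ∪ T7) T8 := by
    rw [Finset.disjoint_left]; intro v hv hv'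
    rw [hmem8] at hv'
    rcases Finset.mem_union.mp hv with h | h
    · rw [hmem6] at h; omega
    · rw [hmem7] at h; omega
  have hunion : T6 ∪ T7 ∪ T8 = Finset.univ := by
    ext v
    simp only [Finset.mem_union, hmem6 v, hmem7 v, hmem8 v, Finset.mem_univ, iff_true]
    have := b3 v; omega
  have hcards : T6.card + T7.card + T8.card = 15 := by
    rw [← Finset.card_union_of_disjoint hdisj67, ← Finset.card_union_of_disjoint hdisj678,
      hunion, Finset.card_univ, hV]
  have hsum678 : ∑ v, G.degree v = 6 * T6.card + 7 * T7.card + 8 * T8.card := by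
    rw [← hunion, Finset.sum_union hdisj678, Finset.sum_union hdisj67]
    have e6 : ∑ v ∈ T6, G.degree v = 6 * T6.card := by
      rw [Finset.sum_congr rfl (fun v hv => (hmem6 v).mp hv), Finset.sum_const,
        smul_eq_mul, mul_comm]
    have e7 : ∑ v ∈ T7, G.degree v = 7 * T7.card := by
      rw [Finset.sum_congr rfl (fun v hv => (hmem7 v).mp hv), Finset.sum_const,
        smul_eq_mul, mul_comm]
    have e8 : ∑ v ∈ T8, G.degree v = 8 * T8.card := by
      rw [Finset.sum_congr rfl (fun v hv => (hmem8 v).mp hv), Finset.sum_const,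
        smul_eq_mul, mul_comm]
    omega
  -- each degree-6 vertex has ≥ 4 degree-8 neighbors
  have hB6 : ∀ v ∈ T6, 4 ≤ (G.neighborFinset v ∩ T8).card := by
    intro v hv
    have hv6 : G.degree v = 6 := (hmem6 v).mp hv
    have hle : ∑ u ∈ G.neighborFinset v, G.degree u
        ≤ ∑ u ∈ G.neighborFinset v, (7 + if u ∈ T8 then 1 else 0) := by
      apply Finset.sum_le_sum
      intro u _
      by_cases h : u ∈ T8
      · rw [(hmem8 u).mp h]; simp [h]
      · have h8 : G.degree u ≠ 8 := fun hc => h ((hmem8 u).mpr hc)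
        have := (b3 u).2
        simp only [h, if_false]
        omega
    have heq : ∑ u ∈ G.neighborFinset v, (7 + if u ∈ T8 then 1 else 0)
        = (G.neighborFinset v).card * 7 + (G.neighborFinset v ∩ T8).card := by
      rw [Finset.sum_add_distrib, Finset.sum_const, smul_eq_mul, ← Finset.card_filter,
        Finset.filter_mem_eq_inter]
    have hcardn : (G.neighborFinset v).card = G.degree v := rfl
    have := h1 v
    omega
  -- each degree-8 vertex: S w + 2 * (# degree-6 neighbors) ≤ 64
  have hB8 : ∀ w ∈ T8, (∑ u ∈ G.neighborFinset w, G.degree u)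
      + 2 * (G.neighborFinset w ∩ T6).card ≤ 64 := by
    intro w hw
    have hw8 : G.degree w = 8 := (hmem8 w).mp hw
    have hle : ∑ u ∈ G.neighborFinset w, (G.degree u + if u ∈ T6 then 2 else 0)
        ≤ ∑ _u ∈ G.neighborFinset w, 8 := by
      apply Finset.sum_le_sum
      intro u _
      by_cases h : u ∈ T6
      · rw [(hmem6 u).mp h]; simp [h]
      · have := (b3 u).2
        simp only [h, if_false]
        omega
    have heq : ∑ u ∈ G.neighborFinset w, (G.degree u + if u ∈ T6 then 2 else 0)
        = (∑ u ∈ G.neighborFinset w, G.degree u) + 2 * (G.neighborFinset w ∩ T6).card := by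
      rw [Finset.sum_add_distrib]
      congr 1
      rw [← Finset.filter_mem_eq_inter, Finset.card_filter, Finset.mul_sum]
      apply Finset.sum_congr rfl
      intro u _
      by_cases h : u ∈ T6 <;> simp [h]
    have hconst : ∑ _u ∈ G.neighborFinset w, (8 : ℕ) = 64 := by
      rw [Finset.sum_const, smul_eq_mul]
      have hcardn : (G.neighborFinset w).card = G.degree w := rfl
      rw [hcardn, hw8]
    omega
  have hlow : 4 * T6.card ≤ ∑ v ∈ T6, (G.neighborFinset v ∩ T8).card := by
    calc 4 * T6.card = ∑ _v ∈ T6, 4 := by rw [Finset.sum_const, smul_eq_mul, mul_comm]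
      _ ≤ _ := Finset.sum_le_sum hB6
  have hswap := aux_swap G T6 T8
  have key : ∀ n : ℕ, (∑ v, G.degree v) + n = 110 →
      2 * (∑ w ∈ T8, (G.neighborFinset w ∩ T6).card) ≤ T8.card * n := by
    intro n hn
    rw [Finset.mul_sum]
    apply Finset.sum_le_card_nsmul
    intro w hw
    have := hB8 w hw
    have := hS8 w ((hmem8 w).mp hw)
    omega
  rcases hE with h | h | h | h
  · have hk := key 12 (by omega); omega
  · have hk := key 10 (by omega); omega
  · have hk := key 8 (by omega); omega
  · have hk := key 6 (by omega); omega
end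

section
/- Let n ≥ 15 and let G be a finite simple graph on n vertices. Then there exists H equal to G or to the complement of G together with a nonempty set S of vertices such that the subgraph of H induced by S is connected and at least n − ⌊(n+1)/4⌋ vertices outside S have a neighbor (in H) in S. (Equivalently, G or its complement has a minor with maximum degree at least n − ⌊(n+1)/4⌋, i.e. n − ⌊(n+1)/4⌋ ≤ f(n).) -/
open Finset

section Aux

open scoped Classical

variable {V : Type*} [Fintype V]

/-- Vertices outside `S` with no `H`-neighbor in `S` (the undominated vertices). -/
noncomputable def USet (H : SimpleGraph V) (S : Finset V) : Finset V :=
  Finset.univ.filter fun x => x ∉ S ∧ ∀ u ∈ S, ¬ H.Adj u x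

/-- Vertices outside `S` with an `H`-neighbor in `S` (the dominated vertices). -/
noncomputable def DSet (H : SimpleGraph V) (S : Finset V) : Finset V :=
  Finset.univ.filter fun x => x ∉ S ∧ ∃ u ∈ S, H.Adj u x

lemma mem_USet {H : SimpleGraph V} {S : Finset V} {x : V} :
    x ∈ USet H S ↔ x ∉ S ∧ ∀ u ∈ S, ¬ H.Adj u x := by
  classical simp [USet]

lemma mem_DSet {H : SimpleGraph V} {S : Finset V} {x : V} :
    x ∈ DSet H S ↔ x ∉ S ∧ ∃ u ∈ S, H.Adj u x := by
  classical simp [DSet]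

lemma card_partition (H : SimpleGraph V) (S : Finset V) :
    S.card + (USet H S).card + (DSet H S).card = Fintype.card V := by
  classical
  have h1 : Disjoint (USet H S) (DSet H S) := by
    rw [Finset.disjoint_left]
    intro x hx hx'
    rw [mem_USet] at hx
    rw [mem_DSet] at hx'
    obtain ⟨u, hu, hadj⟩ := hx'.2
    exact hx.2 u hu hadj
  have h2 : USet H S ∪ DSet H S = Sᶜ := by
    ext x
    simp only [Finset.mem_union, mem_USet, mem_DSet, Finset.mem_compl]
    constructor
    · rintro (⟨h, -⟩ | ⟨h, -⟩) <;> exact h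
    · intro h
      by_cases hc : ∃ u ∈ S, H.Adj u x
      · exact Or.inr ⟨h, hc⟩
      · exact Or.inl ⟨h, fun u hu ha => hc ⟨u, hu, ha⟩⟩
  have h3 := Finset.card_union_of_disjoint h1
  rw [h2, Finset.card_compl] at h3
  have h5 : S.card ≤ Fintype.card V := Finset.card_le_univ S
  omega

lemma count_final (H : SimpleGraph V) (S : Finset V) :
    {x : V | x ∉ S ∧ ∃ u ∈ S, H.Adj u x}.ncard = (DSet H S).card := by
  classical
  have h : {x : V | x ∉ S ∧ ∃ u ∈ S, H.Adj u x} = ↑(DSet H S) := by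
    ext x
    simp [mem_DSet]
  rw [h, Set.ncard_coe_finset]

lemma induce_connected_singleton (H : SimpleGraph V) (v : V) :
    (H.induce (↑({v} : Finset V) : Set V)).Connected := by
  haveI : Nonempty (↑({v} : Finset V) : Set V) := ⟨⟨v, by simp⟩⟩
  refine ⟨fun x y => ?_⟩
  have hx : x.1 = v := by have := x.2; simpa using this
  have hy : y.1 = v := by have := y.2; simpa using this
  have hxy : x = y := Subtype.ext (hx.trans hy.symm)
  rw [hxy]

lemma induce_connected_insert (H : SimpleGraph V) {S : Finset V} {d u : V}
    (hu : u ∈ S) (ha : H.Adj u d) (hS : (H.induce (↑S : Set V)).Connected) :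
    (H.induce (↑(insert d S) : Set V)).Connected := by
  classical
  have hsub : (↑S : Set V) ⊆ (↑(insert d S) : Set V) := by
    intro x hx
    simp only [Finset.coe_insert, Set.mem_insert_iff]
    exact Or.inr hx
  have humem : u ∈ (↑(insert d S) : Set V) := by
    simp only [Finset.coe_insert, Set.mem_insert_iff, Finset.mem_coe]
    exact Or.inr hu
  haveI : Nonempty (↑(insert d S) : Set V) := ⟨⟨u, humem⟩⟩
  refine ⟨fun x y => ?_⟩
  have key : ∀ z : (↑(insert d S) : Set V),
      (H.induce (↑(insert d S) : Set V)).Reachable z ⟨u, humem⟩ := by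
    intro z
    by_cases hz : z.1 ∈ S
    · have hr := hS.preconnected ⟨z.1, by simpa using hz⟩ ⟨u, by simpa using hu⟩
      exact hr.map (SimpleGraph.induceHomOfLE H hsub).toHom
    · have hzd : z.1 = d := by
        have := z.2
        simp only [Finset.coe_insert, Set.mem_insert_iff, Finset.mem_coe] at this
        tauto
      have hadj : (H.induce (↑(insert d S) : Set V)).Adj z ⟨u, humem⟩ := by
        simp only [SimpleGraph.induce, SimpleGraph.comap_adj, Function.Embedding.coe_subtype]
        rw [hzd]
        exact ha.symm
      exact hadj.reachable
  exact (key x).trans (key y).symm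

lemma induce_connected_star (H : SimpleGraph V) {s : V} {T : Finset V}
    (h : ∀ t ∈ T, H.Adj s t) :
    (H.induce (↑(insert s T) : Set V)).Connected := by
  classical
  have hsmem : s ∈ (↑(insert s T) : Set V) := by simp
  haveI : Nonempty (↑(insert s T) : Set V) := ⟨⟨s, hsmem⟩⟩
  refine ⟨fun x y => ?_⟩
  have key : ∀ z : (↑(insert s T) : Set V),
      (H.induce (↑(insert s T) : Set V)).Reachable z ⟨s, hsmem⟩ := by
    intro z
    by_cases hz : z.1 = s
    · have hzz : z = (⟨s, hsmem⟩ : (↑(insert s T) : Set V)) := Subtype.ext hz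
      rw [hzz]
    · have hzT : z.1 ∈ T := by
        have := z.2
        simp only [Finset.coe_insert, Set.mem_insert_iff, Finset.mem_coe] at this
        tauto
      have hadj : (H.induce (↑(insert s T) : Set V)).Adj z ⟨s, hsmem⟩ := by
        simp only [SimpleGraph.induce, SimpleGraph.comap_adj, Function.Embedding.coe_subtype]
        exact (h z.1 hzT).symm
      exact hadj.reachable
  exact (key x).trans (key y).symm

/-- If every dominated vertex has fewer than `t` undominated neighbors, while at least `t`
vertices are undominated, then the complement has a small connected dominating set. -/
lemma stuck_lemma (H : SimpleGraph V) {S : Finset V} (hS : S.Nonempty) {t : ℕ} (ht : 1 ≤ t)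
    (hU : t ≤ (USet H S).card)
    (hD : ∀ d ∈ DSet H S, ((USet H S).filter (fun x => H.Adj d x)).card < t) :
    ∃ S' : Finset V, S'.card ≤ t + 1 ∧ S'.Nonempty ∧
      (Hᶜ.induce (↑S' : Set V)).Connected ∧ USet Hᶜ S' = ∅ := by
  classical
  obtain ⟨T, hTsub, hTcard⟩ := Finset.exists_subset_card_eq hU
  obtain ⟨s, hs⟩ := hS
  have hTU : ∀ x ∈ T, x ∉ S ∧ ∀ u ∈ S, ¬ H.Adj u x := by
    intro x hx
    exact mem_USet.mp (hTsub hx)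
  refine ⟨insert s T, ?_, ⟨s, Finset.mem_insert_self _ _⟩, ?_, ?_⟩
  · calc (insert s T).card ≤ T.card + 1 := Finset.card_insert_le _ _
      _ = t + 1 := by rw [hTcard]
  · apply induce_connected_star
    intro x hx
    obtain ⟨hxS, hxn⟩ := hTU x hx
    rw [SimpleGraph.compl_adj]
    exact ⟨fun h => hxS (h ▸ hs), hxn s hs⟩
  · rw [Finset.eq_empty_iff_forall_notMem]
    intro x hx
    rw [mem_USet] at hx
    obtain ⟨hxS', hxn⟩ := hx
    by_cases hxS : x ∈ S
    · -- use any element of T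
      have hTne : T.Nonempty := Finset.card_pos.mp (by omega)
      obtain ⟨w, hw⟩ := hTne
      obtain ⟨hwS, hwn⟩ := hTU w hw
      refine hxn w (Finset.mem_insert_of_mem hw) ?_
      rw [SimpleGraph.compl_adj]
      exact ⟨fun h => hwS (h ▸ hxS), fun h => hwn x hxS h.symm⟩
    · by_cases hxU : ∀ u ∈ S, ¬ H.Adj u x
      · -- x is in USet H S ; use s
        refine hxn s (Finset.mem_insert_self _ _) ?_
        rw [SimpleGraph.compl_adj]
        refine ⟨fun h => hxS' (h ▸ Finset.mem_insert_self _ _), hxU s hs⟩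
      · -- x is in DSet H S
        push_neg at hxU
        have hxD : x ∈ DSet H S := mem_DSet.mpr ⟨hxS, hxU⟩
        have hcard := hD x hxD
        have hex : ∃ w ∈ T, ¬ H.Adj x w := by
          by_contra hc
          push_neg at hc
          have hsubf : T ⊆ (USet H S).filter (fun y => H.Adj x y) := by
            intro y hy
            rw [Finset.mem_filter]
            exact ⟨hTsub hy, hc y hy⟩
          have := Finset.card_le_card hsubf
          omega
        obtain ⟨w, hwT, hwadj⟩ := hex
        obtain ⟨hwS, hwn⟩ := hTU w hwT
        refine hxn w (Finset.mem_insert_of_mem hwT) ?_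
        rw [SimpleGraph.compl_adj]
        refine ⟨?_, fun h => hwadj h.symm⟩
        rintro rfl
        obtain ⟨u, huS, huadj⟩ := hxU
        exact hwn u huS huadj
  
lemma USet_insert_card (H : SimpleGraph V) (S : Finset V) (d : V) :
    (USet H (insert d S)).card + ((USet H S).filter (fun x => H.Adj d x)).card
      ≤ (USet H S).card := by
  classical
  have hsub : USet H (insert d S) ⊆
      (USet H S) \ ((USet H S).filter (fun x => H.Adj d x)) := by
    intro x hx
    rw [mem_USet] at hx
    rw [Finset.mem_sdiff, mem_USet, Finset.mem_filter]
    refine ⟨⟨fun h => hx.1 (Finset.mem_insert_of_mem h),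
      fun u hu => hx.2 u (Finset.mem_insert_of_mem hu)⟩, ?_⟩
    rintro ⟨-, hadj⟩
    exact hx.2 d (Finset.mem_insert_self _ _) hadj
  have h1 := Finset.card_le_card hsub
  have h2 : ((USet H S) \ ((USet H S).filter (fun x => H.Adj d x))).card
      = (USet H S).card - ((USet H S).filter (fun x => H.Adj d x)).card :=
    Finset.card_sdiff_of_subset (Finset.filter_subset _ _)
  have h3 := Finset.card_le_card (Finset.filter_subset (fun x => H.Adj d x) (USet H S))
  omega

/-- Main lemma: starting from a vertex with few non-neighbors, greedily grow a connected
set; either it gives small waste in `H`, or `Hᶜ` has a tiny connected dominating set. -/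
lemma main_lemma (H : SimpleGraph V) (v : V) (n : ℕ) (hn : 15 ≤ n)
    (hcard : Fintype.card V = n)
    (ha : 2 * (USet H ({v} : Finset V)).card + 1 ≤ n) :
    ∃ H' : SimpleGraph V, (H' = H ∨ H' = Hᶜ) ∧ ∃ S : Finset V, S.Nonempty ∧
      (H'.induce (↑S : Set V)).Connected ∧ S.card + (USet H' S).card ≤ (n + 1) / 4 := by
  classical
  set a := (USet H ({v} : Finset V)).card with ha_def
  set F : Finset (Finset V) := Finset.univ.filter
    (fun S => v ∈ S ∧ (H.induce (↑S : Set V)).Connected ∧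
      3 * S.card + (USet H S).card ≤ a + 3) with hF_def
  have hvF : ({v} : Finset V) ∈ F := by
    simp only [hF_def, Finset.mem_filter, Finset.mem_univ, true_and]
    refine ⟨Finset.mem_singleton_self v, induce_connected_singleton H v, ?_⟩
    simp only [Finset.card_singleton]
    omega
  obtain ⟨S, hSF, hmax⟩ := F.exists_max_image Finset.card ⟨{v}, hvF⟩
  simp only [hF_def, Finset.mem_filter, Finset.mem_univ, true_and] at hSF
  obtain ⟨hvS, hconn, hpsi⟩ := hSF
  have hSne : S.Nonempty := ⟨v, hvS⟩
  -- maximality: no dominated vertex has 3 undominated neighbors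
  have hstar : ∀ d ∈ DSet H S, ((USet H S).filter (fun x => H.Adj d x)).card ≤ 2 := by
    by_contra hcon
    push_neg at hcon
    obtain ⟨d, hd, hcard3⟩ := hcon
    rw [mem_DSet] at hd
    obtain ⟨hdS, w, hwS, hwadj⟩ := hd
    have hconn' := induce_connected_insert H hwS hwadj hconn
    have hUcard := USet_insert_card H S d
    have hmem : insert d S ∈ F := by
      simp only [hF_def, Finset.mem_filter, Finset.mem_univ, true_and]
      refine ⟨Finset.mem_insert_of_mem hvS, hconn', ?_⟩
      rw [Finset.card_insert_of_notMem hdS]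
      omega
    have hle := hmax _ hmem
    rw [Finset.card_insert_of_notMem hdS] at hle
    omega
  by_cases hu3 : 3 ≤ (USet H S).card
  · -- stuck with t = 3 : waste 4 in the complement
    obtain ⟨S', hS'card, hS'ne, hS'conn, hS'U⟩ := stuck_lemma H hSne (t := 3) (by norm_num) hu3
      (fun d hd => lt_of_le_of_lt (hstar d hd) (by norm_num))
    refine ⟨Hᶜ, Or.inr rfl, S', hS'ne, hS'conn, ?_⟩
    rw [hS'U]
    simp only [Finset.card_empty]
    omega
  · by_cases hu2 : (USet H S).card = 2
    · by_cases hd2 : ∃ d ∈ DSet H S, 2 ≤ ((USet H S).filter (fun x => H.Adj d x)).card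
      · -- one more step finishes the domination
        obtain ⟨d, hd, h2⟩ := hd2
        rw [mem_DSet] at hd
        obtain ⟨hdS, w, hwS, hwadj⟩ := hd
        refine ⟨H, Or.inl rfl, insert d S, ⟨v, Finset.mem_insert_of_mem hvS⟩,
          induce_connected_insert H hwS hwadj hconn, ?_⟩
        have hUcard := USet_insert_card H S d
        rw [Finset.card_insert_of_notMem hdS]
        omega
      · -- stuck with t = 2 : waste 3 in the complement
        push_neg at hd2
        obtain ⟨S', hS'card, hS'ne, hS'conn, hS'U⟩ := stuck_lemma H hSne (t := 2) (by norm_num)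
          (by omega) (fun d hd => by have := hd2 d hd; omega)
        refine ⟨Hᶜ, Or.inr rfl, S', hS'ne, hS'conn, ?_⟩
        rw [hS'U]
        simp only [Finset.card_empty]
        omega
    · -- at most one undominated vertex : waste is small
      refine ⟨H, Or.inl rfl, S, hSne, hconn, ?_⟩
      omega

end Aux

theorem stmt18 (n : ℕ) (hn : 15 ≤ n) {V : Type*} [Fintype V]
    (G : SimpleGraph V) (hV : Fintype.card V = n) :
    ∃ H : SimpleGraph V, (H = G ∨ H = Gᶜ) ∧
      ∃ S : Finset V, S.Nonempty ∧
        (H.induce (↑S : Set V)).Connected ∧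
        n - (n + 1) / 4 ≤ {v : V | v ∉ S ∧ ∃ u ∈ S, H.Adj u v}.ncard := by
  classical
  have hpos : 0 < Fintype.card V := by rw [hV]; omega
  obtain ⟨v⟩ := Fintype.card_pos_iff.mp hpos
  have hpart := card_partition G ({v} : Finset V)
  rw [hV, Finset.card_singleton] at hpart
  have hUD : USet Gᶜ ({v} : Finset V) = DSet G ({v} : Finset V) := by
    ext x
    rw [mem_USet, mem_DSet]
    simp only [Finset.mem_singleton, SimpleGraph.compl_adj]
    constructor
    · rintro ⟨hx, hforall⟩
      have := hforall v rfl
      push_neg at this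
      exact ⟨hx, v, rfl, this (fun h => hx h.symm)⟩
    · rintro ⟨hx, u, rfl, hadj⟩
      refine ⟨hx, ?_⟩
      rintro u rfl
      rintro ⟨-, hnadj⟩
      exact hnadj hadj
  have hfinish : ∀ H' : SimpleGraph V, ∀ S : Finset V, S.Nonempty →
      (H'.induce (↑S : Set V)).Connected → S.card + (USet H' S).card ≤ (n + 1) / 4 →
      S.Nonempty ∧ (H'.induce (↑S : Set V)).Connected ∧
        n - (n + 1) / 4 ≤ {x : V | x ∉ S ∧ ∃ u ∈ S, H'.Adj u x}.ncard := by
    intro H' S h1 h2 h3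
    refine ⟨h1, h2, ?_⟩
    rw [count_final]
    have hp := card_partition H' S
    rw [hV] at hp
    omega
  rcases le_or_gt (2 * (USet G ({v} : Finset V)).card + 1) n with hle | hlt
  · obtain ⟨H', hH', S, h1, h2, h3⟩ := main_lemma G v n hn hV hle
    exact ⟨H', hH', S, hfinish H' S h1 h2 h3⟩
  · have hle' : 2 * (USet Gᶜ ({v} : Finset V)).card + 1 ≤ n := by
      rw [hUD]; omega
    obtain ⟨H', hH', S, h1, h2, h3⟩ := main_lemma Gᶜ v n hn hV hle'
    refine ⟨H', ?_, S, hfinish H' S h1 h2 h3⟩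
    rcases hH' with h | h
    · exact Or.inr h
    · exact Or.inl (by rw [h, compl_compl])
end
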